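/- arXiv:2006.15734 — 4 statements merged into one kernel-verified Lean document; each statement's English description precedes it below -/
import Mathlib

section
/- Suppose there exists a k-GDD of type v_1^{u_1} v_2^{u_2} ... v_n^{u_n} where v_i = (k−1)r_i + k + 1, and for each i there exists a pentagonal geometry PENT(k, r_i) with exactly p_i opposite line pairs. Let N = Σ u_i, R = Σ u_i r_i, P = Σ u_i p_i, and assume (k−1) divides (N−1)(k+1). Then there exists a pentagonal geometry PENT(k, R + (N − 1)(k + 1)/(k − 1)) with exactly P opposite line pairs. -/
/-- Two points are collinear if they are equal or some line contains both. -/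
def Collin {P : Type} [DecidableEq P] (Lines : Finset (Finset P)) (x y : P) : Prop :=
  x = y ∨ ∃ L ∈ Lines, x ∈ L ∧ y ∈ L

/-- A pentagonal geometry PENT(k, r): a partial linear space where every line has `k`
points, every point is on `r` lines, and for every point there is a line consisting
exactly of the points not collinear with it. -/
structure IsPentGeom {P : Type} [DecidableEq P] (Lines : Finset (Finset P)) (k r : ℕ) : Prop where
  line_size : ∀ L ∈ Lines, L.card = k
  point_deg : ∀ x : P, (Lines.filter (fun L => x ∈ L)).card = r
  plinear : ∀ x y : P, x ≠ y → ∀ L ∈ Lines, x ∈ L → y ∈ L →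
      ∀ M ∈ Lines, x ∈ M → y ∈ M → L = M
  opp : ∀ x : P, ∃ L ∈ Lines, ∀ y : P, y ∈ L ↔ ¬ Collin Lines x y

/-- An opposite line pair: two disjoint lines such that each is the opposite line of
every point of the other. -/
def IsOppPair {P : Type} [DecidableEq P] (Lines : Finset (Finset P)) (L M : Finset P) : Prop :=
  L ∈ Lines ∧ M ∈ Lines ∧ Disjoint L M ∧
  (∀ x ∈ L, ∀ y : P, y ∈ M ↔ ¬ Collin Lines x y) ∧
  (∀ y ∈ M, ∀ x : P, x ∈ L ↔ ¬ Collin Lines y x)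

/-- A group divisible design with block size `k`: the groups partition the point set,
every pair of points from distinct groups lies in exactly one block, and no pair of
points from a common group lies in any block. -/
structure IsGDD {V : Type} [DecidableEq V] (k : ℕ) (Groups Blocks : Finset (Finset V)) : Prop where
  partition : ∀ x : V, ∃! G, G ∈ Groups ∧ x ∈ G
  blocks_nonempty : Blocks.Nonempty
  block_size : ∀ B ∈ Blocks, B.card = k
  cross_pair : ∀ x y : V, x ≠ y → (∀ G ∈ Groups, ¬ (x ∈ G ∧ y ∈ G)) →
      ∃! B, B ∈ Blocks ∧ x ∈ B ∧ y ∈ B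
  within_pair : ∀ x y : V, x ≠ y → ∀ G ∈ Groups, x ∈ G → y ∈ G →
      ∀ B ∈ Blocks, ¬ (x ∈ B ∧ y ∈ B)

/-- The number of (unordered) opposite line pairs of a pentagonal geometry. -/
noncomputable def oppPairCount {P : Type} [DecidableEq P] (Lines : Finset (Finset P)) : ℕ :=
  Set.ncard {s : Finset (Finset P) | ∃ L M : Finset P, s = {L, M} ∧ IsOppPair Lines L M}

lemma multiset_matching {A B C : Type*} [DecidableEq A] (f : A → C) (g : B → C) :
    ∀ (t : Multiset B) (s : Multiset A), s.map f = t.map g →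
    ∃ w : Multiset (A × B), w.map Prod.fst = s ∧ w.map Prod.snd = t ∧
      ∀ x ∈ w, f x.1 = g x.2 := by
  intro t
  induction t using Multiset.induction with
  | empty =>
      intro s hs
      simp at hs
      exact ⟨0, by simp [hs]⟩
  | cons b t ih =>
      intro s hs
      have hb : g b ∈ s.map f := by rw [hs]; simp
      obtain ⟨a, ha, hfa⟩ := Multiset.mem_map.1 hb
      have hs' : (s.erase a).map f = t.map g := by
        have : s = a ::ₘ s.erase a := (Multiset.cons_erase ha).symm
        rw [this, Multiset.map_cons, hfa, Multiset.map_cons] at hs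
        exact (Multiset.cons_inj_right _).1 hs
      obtain ⟨w, hw1, hw2, hw3⟩ := ih (s.erase a) hs'
      refine ⟨(a, b) ::ₘ w, ?_, ?_, ?_⟩
      · rw [Multiset.map_cons, hw1]; exact Multiset.cons_erase ha
      · rw [Multiset.map_cons, hw2]
      · intro x hx
        rcases Multiset.mem_cons.1 hx with h | h
        · rw [h]; exact hfa
        · exact hw3 x h

lemma multiset_map_finsum {α β γ : Type*} (f : α → β) (s : Finset γ) (g : γ → Multiset α) :
    Multiset.map f (∑ i ∈ s, g i) = ∑ i ∈ s, Multiset.map f (g i) := by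
  classical
  induction s using Finset.induction with
  | empty => simp
  | insert _ _ h ih => rw [Finset.sum_insert h, Finset.sum_insert h, Multiset.map_add, ih]

lemma multiset_sum_finsum {α γ : Type*} [AddCommMonoid α] (s : Finset γ) (g : γ → Multiset α) :
    (∑ i ∈ s, g i).sum = ∑ i ∈ s, (g i).sum := by
  classical
  induction s using Finset.induction with
  | empty => simp
  | insert _ _ h ih => rw [Finset.sum_insert h, Finset.sum_insert h, Multiset.sum_add, ih]

open Classical in
noncomputable def oppPairsFinset {P : Type} [DecidableEq P] (Lines : Finset (Finset P)) :
    Finset (Finset (Finset P)) :=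
  ((Lines ×ˢ Lines).filter (fun q => IsOppPair Lines q.1 q.2)).image (fun q => ({q.1, q.2}))

lemma mem_oppPairsFinset {P : Type} [DecidableEq P] (Lines : Finset (Finset P))
    (s : Finset (Finset P)) :
    s ∈ oppPairsFinset Lines ↔ ∃ L M : Finset P, s = {L, M} ∧ IsOppPair Lines L M := by
  classical
  simp only [oppPairsFinset, Finset.mem_image, Finset.mem_filter, Finset.mem_product]
  constructor
  · rintro ⟨⟨L, M⟩, ⟨⟨hL, hM⟩, hopp⟩, rfl⟩
    exact ⟨L, M, rfl, hopp⟩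
  · rintro ⟨L, M, rfl, hopp⟩
    exact ⟨(L, M), ⟨⟨hopp.1, hopp.2.1⟩, hopp⟩, rfl⟩

lemma oppPairCount_eq_card {P : Type} [DecidableEq P] (Lines : Finset (Finset P)) :
    oppPairCount Lines = (oppPairsFinset Lines).card := by
  rw [oppPairCount, ← Set.ncard_coe_finset]
  congr 1
  ext s
  simp only [Set.mem_setOf_eq, Finset.mem_coe, mem_oppPairsFinset]

/-- Wilson-style construction: from a k-GDD of type v₁^{u₁} ⋯ vₙ^{uₙ} with
vᵢ = (k-1)rᵢ + k + 1 and pentagonal geometries PENT(k, rᵢ) with exactly pᵢ opposite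
line pairs, one obtains a PENT(k, R + (N-1)(k+1)/(k-1)) with exactly P opposite line
pairs, where N = Σ uᵢ, R = Σ uᵢ rᵢ, P = Σ uᵢ pᵢ. -/
theorem pent_gdd_construction (k n : ℕ) (hk : 2 ≤ k) (r u p v : Fin n → ℕ)
    (hv : ∀ i, v i = (k - 1) * r i + k + 1)
    (hpent : ∀ i, ∃ Lines : Finset (Finset (Fin (v i))),
      IsPentGeom Lines k (r i) ∧ oppPairCount Lines = p i)
    (hgdd : ∃ Groups Blocks : Finset (Finset (Fin (∑ i, u i * v i))),
      IsGDD k Groups Blocks ∧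
      Groups.val.map Finset.card = ∑ i, Multiset.replicate (u i) (v i))
    (hdvd : (k - 1) ∣ ((∑ i, u i) - 1) * (k + 1)) :
    ∃ Lines : Finset (Finset
        (Fin ((k - 1) * ((∑ i, u i * r i) + ((∑ i, u i) - 1) * (k + 1) / (k - 1)) + k + 1))),
      IsPentGeom Lines k ((∑ i, u i * r i) + ((∑ i, u i) - 1) * (k + 1) / (k - 1)) ∧
      oppPairCount Lines = ∑ i, u i * p i := by
  classical
  set T := ∑ i, u i * v i with hTdef
  set N := ∑ i, u i with hNdef
  set R := ∑ i, u i * r i with hRdef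
  set q := (N - 1) * (k + 1) / (k - 1) with hqdef
  obtain ⟨Groups, Blocks, hGDD, hsz⟩ := hgdd
  have hq : (k - 1) * q = (N - 1) * (k + 1) := Nat.mul_div_cancel' hdvd
  -- positivity facts
  have hT0 : 0 < T := by
    obtain ⟨B, hB⟩ := hGDD.blocks_nonempty
    have hBk := hGDD.block_size B hB
    have : B.Nonempty := Finset.card_pos.1 (by omega)
    obtain ⟨x, -⟩ := this
    exact x.pos
  have hN1 : 1 ≤ N := by
    by_contra h
    have hN0 : N = 0 := by omega
    rw [hNdef] at hN0
    have hu : ∀ i, u i = 0 := fun i =>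
      Finset.sum_eq_zero_iff.1 hN0 i (Finset.mem_univ i)
    have : T = 0 := by
      rw [hTdef]
      exact Finset.sum_eq_zero (fun i _ => by rw [hu i, zero_mul])
    omega
  have hn0 : 0 < n := by
    rcases Nat.eq_zero_or_pos n with h | h
    · exfalso; rw [hTdef] at hT0; subst h; simp at hT0
    · exact h
  have hTv : T = (k - 1) * R + N * (k + 1) := by
    rw [hTdef, hRdef, hNdef, Finset.mul_sum, Finset.sum_mul, ← Finset.sum_add_distrib]
    refine Finset.sum_congr rfl (fun i _ => ?_)
    rw [hv i]; ring
  have hNk : (N - 1) * (k + 1) + (k + 1) = N * (k + 1) := by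
    obtain ⟨m, hm⟩ := Nat.exists_eq_add_of_le hN1
    have h1 : N - 1 = m := by omega
    rw [h1, hm]
    ring
  have hT : (k - 1) * (R + q) + k + 1 = T := by
    rw [mul_add, hq, hTv]
    omega
  rw [hT]
  -- Matching of groups with indices
  have hmap : Groups.val.map Finset.card = (∑ i, Multiset.replicate (u i) i).map v := by
    rw [hsz, multiset_map_finsum]
    simp [Multiset.map_replicate]
  obtain ⟨w, hwfst, hwsnd, hwfg⟩ :=
    multiset_matching Finset.card v (∑ i, Multiset.replicate (u i) i) Groups.val hmap
  have hGnodup : (w.map Prod.fst).Nodup := by rw [hwfst]; exact Groups.nodup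
  -- index function
  have hidx_ex : ∀ G : Finset (Fin T), ∃ i : Fin n, G ∈ Groups → (G, i) ∈ w := by
    intro G
    by_cases hG : G ∈ Groups
    · have : G ∈ w.map Prod.fst := by rw [hwfst]; exact hG
      obtain ⟨x, hxw, hx1⟩ := Multiset.mem_map.1 this
      exact ⟨x.2, fun _ => by rwa [← hx1]⟩
    · exact ⟨⟨0, hn0⟩, fun h => absurd h hG⟩
  choose idx hidx using hidx_ex
  have hidx_uniq : ∀ x ∈ w, x.2 = idx x.1 := by
    intro x hxw
    have hG : x.1 ∈ Groups := by
      have : x.1 ∈ w.map Prod.fst := Multiset.mem_map_of_mem _ hxw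
      rwa [hwfst] at this
    have h2 : (x.1, idx x.1) ∈ w := hidx x.1 hG
    by_contra hne
    have hxne : (x.1, idx x.1) ≠ x := fun h => hne (congrArg Prod.snd h).symm
    have h3 : (x.1, idx x.1) ∈ w.erase x := (Multiset.mem_erase_of_ne hxne).2 h2
    have hw' : w = x ::ₘ w.erase x := (Multiset.cons_erase hxw).symm
    rw [hw', Multiset.map_cons] at hGnodup
    exact (Multiset.nodup_cons.1 hGnodup).1
      (Multiset.mem_map.2 ⟨_, h3, rfl⟩)
  have hweq : Groups.val.map (fun G => (G, idx G)) = w := by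
    have hnd1 : (Groups.val.map (fun G => (G, idx G))).Nodup :=
      Groups.nodup.map (fun a b hab => congrArg Prod.fst hab)
    have hnd2 : w.Nodup := Multiset.Nodup.of_map Prod.fst hGnodup
    rw [Multiset.Nodup.ext hnd1 hnd2]
    intro a
    constructor
    · intro ha
      obtain ⟨G, hG, hGa⟩ := Multiset.mem_map.1 ha
      rw [← hGa]
      exact hidx G hG
    · intro ha
      have hG : a.1 ∈ Groups := by
        have : a.1 ∈ w.map Prod.fst := Multiset.mem_map_of_mem _ ha
        rwa [hwfst] at this
      refine Multiset.mem_map.2 ⟨a.1, hG, ?_⟩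
      have := hidx_uniq a ha
      exact Prod.ext rfl this.symm
  have hcard_idx : ∀ G ∈ Groups, G.card = v (idx G) := fun G hG => hwfg _ (hidx G hG)
  have hsum_p : ∑ G ∈ Groups, p (idx G) = ∑ i, u i * p i := by
    have h1 : ∑ G ∈ Groups, p (idx G) = (w.map (fun x => p x.2)).sum := by
      rw [← hweq, Multiset.map_map]
      rfl
    rw [h1]
    have h2 : w.map (fun x => p x.2) = ((∑ i, Multiset.replicate (u i) i).map (fun i => p i)) := by
      rw [← hwsnd, Multiset.map_map]
      rfl
    rw [h2, multiset_map_finsum]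
    simp only [Multiset.map_replicate, multiset_sum_finsum, Multiset.sum_replicate, smul_eq_mul]
  -- the group of a point
  have hgrpex : ∀ x : Fin T, ∃ G, G ∈ Groups ∧ x ∈ G := fun x => (hGDD.partition x).exists
  choose grp hgrp1 hgrp2 using hgrpex
  have hgrp_eq : ∀ G ∈ Groups, ∀ x ∈ G, G = grp x := by
    intro G hG x hx
    exact (hGDD.partition x).unique ⟨hG, hx⟩ ⟨hgrp1 x, hgrp2 x⟩
  -- embedding of each group
  obtain ⟨emb, hemb_inj, hemb_mem, hemb_surj⟩ :
      ∃ emb : ∀ G : Finset (Fin T), Fin G.card → Fin T,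
        (∀ G, Function.Injective (emb G)) ∧ (∀ G j, emb G j ∈ G) ∧
        (∀ G, ∀ x ∈ G, ∃ j, emb G j = x) := by
    refine ⟨fun G j => ((G.orderIsoOfFin rfl) j : Fin T), ?_, ?_, ?_⟩
    · intro G a b hab
      exact (G.orderIsoOfFin rfl).injective (Subtype.ext hab)
    · intro G j
      exact ((G.orderIsoOfFin rfl) j).2
    · intro G x hx
      obtain ⟨j, hj⟩ := (G.orderIsoOfFin rfl).surjective ⟨x, hx⟩
      exact ⟨j, congrArg Subtype.val hj⟩
  -- pentagonal geometries on the groups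
  have hGLex : ∀ G : Finset (Fin T), ∃ Ls : Finset (Finset (Fin G.card)),
      G ∈ Groups → IsPentGeom Ls k (r (idx G)) ∧ oppPairCount Ls = p (idx G) := by
    intro G
    by_cases hG : G ∈ Groups
    · have hc := hcard_idx G hG
      rw [hc]
      obtain ⟨Ls, h1, h2⟩ := hpent (idx G)
      exact ⟨Ls, fun _ => ⟨h1, h2⟩⟩
    · exact ⟨∅, fun h => absurd h hG⟩
  choose PG hGL using hGLex
  -- the new line set
  set GLines : Finset (Finset (Fin T)) :=
    Groups.biUnion (fun G => (PG G).image (fun L' => L'.image (emb G))) with hGLines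
  set NL : Finset (Finset (Fin T)) := Blocks ∪ GLines with hNL
  have hGLmem : ∀ M : Finset (Fin T),
      M ∈ GLines ↔ ∃ G ∈ Groups, ∃ L' ∈ PG G, M = L'.image (emb G) := by
    intro M
    simp only [hGLines, Finset.mem_biUnion, Finset.mem_image]
    constructor
    · rintro ⟨G, hG, L', hL', rfl⟩
      exact ⟨G, hG, L', hL', rfl⟩
    · rintro ⟨G, hG, L', hL', rfl⟩
      exact ⟨G, hG, L', hL', rfl⟩
  -- basic facts about embedded lines
  have hline_sub : ∀ G, ∀ L' : Finset (Fin G.card), L'.image (emb G) ⊆ G := by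
    intro G L' x hx
    obtain ⟨j, -, rfl⟩ := Finset.mem_image.1 hx
    exact hemb_mem G j
  have hline_card : ∀ G ∈ Groups, ∀ L' ∈ PG G, (L'.image (emb G)).card = k := by
    intro G hG L' hL'
    rw [Finset.card_image_of_injective _ (hemb_inj G)]
    exact (hGL G hG).1.line_size L' hL'
  have hblock_nsub : ∀ B ∈ Blocks, ∀ G ∈ Groups, ¬ B ⊆ G := by
    intro B hB G hG hsub
    have h2 : 1 < B.card := by rw [hGDD.block_size B hB]; omega
    obtain ⟨a, ha, b, hb, hab⟩ := Finset.one_lt_card.1 h2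
    exact hGDD.within_pair a b hab G hG (hsub ha) (hsub hb) B hB ⟨ha, hb⟩
  have hBG_disj : ∀ B ∈ Blocks, B ∉ GLines := by
    intro B hB hBG
    obtain ⟨G, hG, L', hL', hBeq⟩ := (hGLmem B).1 hBG
    exact hblock_nsub B hB G hG (hBeq ▸ hline_sub G L')
  have hline_size : ∀ L ∈ NL, L.card = k := by
    intro L hL
    rcases Finset.mem_union.1 hL with h | h
    · exact hGDD.block_size L h
    · obtain ⟨G, hG, L', hL', rfl⟩ := (hGLmem L).1 h
      exact hline_card G hG L' hL'
  -- cross pairs condition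
  have hcross_cond : ∀ x y : Fin T, y ∉ grp x → ∀ G ∈ Groups, ¬ (x ∈ G ∧ y ∈ G) := by
    intro x y hy G hG ⟨hxG, hyG⟩
    rw [hgrp_eq G hG x hxG] at hyG
    exact hy hyG
  -- number of blocks through a point
  have hdeg_blocks : ∀ x : Fin T,
      (Blocks.filter (fun B => x ∈ B)).card * (k - 1) = T - (grp x).card := by
    intro x
    have hset : Finset.univ \ grp x =
        (Blocks.filter (fun B => x ∈ B)).biUnion (fun B => B.erase x) := by
      ext y
      simp only [Finset.mem_sdiff, Finset.mem_univ, true_and, Finset.mem_biUnion,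
        Finset.mem_filter, Finset.mem_erase]
      constructor
      · intro hy
        have hxy : x ≠ y := fun h => hy (h ▸ hgrp2 x)
        obtain ⟨B, ⟨hB, hxB, hyB⟩, -⟩ := hGDD.cross_pair x y hxy (hcross_cond x y hy)
        exact ⟨B, ⟨hB, hxB⟩, fun h => hxy h.symm, hyB⟩
      · rintro ⟨B, ⟨hB, hxB⟩, hyx, hyB⟩ hy
        exact hGDD.within_pair x y (fun h => hyx h.symm) (grp x) (hgrp1 x)
          (hgrp2 x) hy B hB ⟨hxB, hyB⟩
    have hdisj : ∀ B1 ∈ Blocks.filter (fun B => x ∈ B), ∀ B2 ∈ Blocks.filter (fun B => x ∈ B),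
        B1 ≠ B2 → Disjoint (B1.erase x) (B2.erase x) := by
      intro B1 hB1 B2 hB2 hne
      rw [Finset.mem_filter] at hB1 hB2
      rw [Finset.disjoint_left]
      intro y hy1 hy2
      rw [Finset.mem_erase] at hy1 hy2
      have hyg : y ∉ grp x := by
        intro hy
        exact hGDD.within_pair x y (fun h => hy1.1 h.symm) (grp x) (hgrp1 x)
          (hgrp2 x) hy B1 hB1.1 ⟨hB1.2, hy1.2⟩
      have := hGDD.cross_pair x y (fun h => hy1.1 h.symm) (hcross_cond x y hyg)
      exact hne (this.unique ⟨hB1.1, hB1.2, hy1.2⟩ ⟨hB2.1, hB2.2, hy2.2⟩)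
    have hcard1 : (Finset.univ \ grp x).card = T - (grp x).card := by
      rw [Finset.card_sdiff_of_subset (Finset.subset_univ _), Finset.card_univ, Fintype.card_fin]
    have hec : ∀ B ∈ Blocks.filter (fun B => x ∈ B), (B.erase x).card = k - 1 := by
      intro B hB
      rw [Finset.mem_filter] at hB
      rw [Finset.card_erase_of_mem hB.2, hGDD.block_size B hB.1]
    rw [← hcard1, hset, Finset.card_biUnion hdisj, Finset.sum_congr rfl hec,
      Finset.sum_const, smul_eq_mul]
  -- number of group lines through a point
  have hdeg_glines : ∀ x : Fin T, ∀ x₀ : Fin (grp x).card, emb (grp x) x₀ = x →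
      (GLines.filter (fun L => x ∈ L)).card = r (idx (grp x)) := by
    intro x x₀ hx₀
    have hfe : GLines.filter (fun L => x ∈ L) =
        ((PG (grp x)).filter (fun L' => x₀ ∈ L')).image (fun L' => L'.image (emb (grp x))) := by
      ext M
      simp only [Finset.mem_filter, Finset.mem_image]
      constructor
      · rintro ⟨hM, hxM⟩
        obtain ⟨G, hG, L', hL', rfl⟩ := (hGLmem M).1 hM
        have hGx : G = grp x := hgrp_eq G hG x (hline_sub G L' hxM)
        subst hGx
        obtain ⟨j, hj, hje⟩ := Finset.mem_image.1 hxM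
        have : j = x₀ := hemb_inj (grp x) (by rw [hje, hx₀])
        exact ⟨L', ⟨hL', this ▸ hj⟩, rfl⟩
      · rintro ⟨L', ⟨hL', hxL'⟩, rfl⟩
        refine ⟨(hGLmem _).2 ⟨grp x, hgrp1 x, L', hL', rfl⟩, ?_⟩
        exact Finset.mem_image.2 ⟨x₀, hxL', hx₀⟩
    rw [hfe, Finset.card_image_of_injective _ (Finset.image_injective (hemb_inj (grp x)))]
    exact (hGL (grp x) (hgrp1 x)).1.point_deg x₀
  -- total degree
  have hdeg : ∀ x : Fin T, (NL.filter (fun L => x ∈ L)).card = R + q := by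
    intro x
    obtain ⟨x₀, hx₀⟩ := hemb_surj (grp x) x (hgrp2 x)
    have hsplit : NL.filter (fun L => x ∈ L) =
        Blocks.filter (fun B => x ∈ B) ∪ GLines.filter (fun L => x ∈ L) := by
      rw [hNL, Finset.filter_union]
    have hdisj : Disjoint (Blocks.filter (fun B => x ∈ B)) (GLines.filter (fun L => x ∈ L)) := by
      rw [Finset.disjoint_left]
      intro B hB1 hB2
      rw [Finset.mem_filter] at hB1 hB2
      exact hBG_disj B hB1.1 hB2.1
    rw [hsplit, Finset.card_union_of_disjoint hdisj, hdeg_glines x x₀ hx₀]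
    -- arithmetic
    have hb := hdeg_blocks x
    have hvG : (grp x).card = (k - 1) * r (idx (grp x)) + (k + 1) := by
      rw [hcard_idx (grp x) (hgrp1 x), hv]
      ring
    have hle : (grp x).card ≤ T := by
      simpa using Finset.card_le_univ (grp x)
    set b := (Blocks.filter (fun B => x ∈ B)).card
    set r₀ := r (idx (grp x))
    have key : (k - 1) * (b + r₀) = (k - 1) * (R + q) := by
      rw [mul_add, mul_add, hq, mul_comm (k-1) b, hb]
      generalize hA : (k - 1) * r₀ = A at hvG ⊢
      generalize hC : (k - 1) * R = C at hTv ⊢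
      generalize hD : (N - 1) * (k + 1) = D at hNk ⊢
      generalize hE : N * (k + 1) = E at hTv hNk
      omega
    have hk1 : 0 < k - 1 := by omega
    exact Nat.eq_of_mul_eq_mul_left hk1 key
  -- collinearity lemmas
  have hCollin_cross : ∀ x y : Fin T, x ≠ y → y ∉ grp x → Collin NL x y := by
    intro x y hxy hy
    obtain ⟨B, ⟨hB, hxB, hyB⟩, -⟩ := hGDD.cross_pair x y hxy (hcross_cond x y hy)
    exact Or.inr ⟨B, Finset.mem_union_left _ hB, hxB, hyB⟩
  have hnoncol_loc : ∀ x y : Fin T, ¬ Collin NL x y → y ∈ grp x := by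
    intro x y hnc
    by_contra hy
    have hxy : x ≠ y := fun h => hnc (Or.inl h)
    exact hnc (hCollin_cross x y hxy hy)
  have hCollin_pull : ∀ G ∈ Groups, ∀ x₀ y₀ : Fin G.card,
      Collin NL (emb G x₀) (emb G y₀) → Collin (PG G) x₀ y₀ := by
    intro G hG x₀ y₀ hc
    rcases hc with h | ⟨L, hL, hxL, hyL⟩
    · exact Or.inl (hemb_inj G h)
    · by_cases hxy : x₀ = y₀
      · exact Or.inl hxy
      · have hexy : emb G x₀ ≠ emb G y₀ := fun h => hxy (hemb_inj G h)
        rcases Finset.mem_union.1 hL with h | h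
        · exact absurd ⟨hxL, hyL⟩
            (hGDD.within_pair _ _ hexy G hG (hemb_mem G x₀) (hemb_mem G y₀) L h)
        · obtain ⟨G', hG', L', hL', rfl⟩ := (hGLmem L).1 h
          have hGG : G' = G := (hgrp_eq G' hG' _ (hline_sub G' L' hxL)).trans
            (hgrp_eq G hG (emb G x₀) (hemb_mem G x₀)).symm
          subst hGG
          obtain ⟨a, ha, hae⟩ := Finset.mem_image.1 hxL
          obtain ⟨b, hb, hbe⟩ := Finset.mem_image.1 hyL
          have ha' : a = x₀ := hemb_inj G' hae
          have hb' : b = y₀ := hemb_inj G' hbe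
          exact Or.inr ⟨L', hL', ha' ▸ ha, hb' ▸ hb⟩
  have hCollin_push : ∀ G ∈ Groups, ∀ x₀ y₀ : Fin G.card,
      Collin (PG G) x₀ y₀ → Collin NL (emb G x₀) (emb G y₀) := by
    intro G hG x₀ y₀ hc
    rcases hc with h | ⟨L', hL', hxL', hyL'⟩
    · exact Or.inl (congrArg _ h)
    · refine Or.inr ⟨L'.image (emb G),
        Finset.mem_union_right _ ((hGLmem _).2 ⟨G, hG, L', hL', rfl⟩), ?_, ?_⟩
      · exact Finset.mem_image.2 ⟨x₀, hxL', rfl⟩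
      · exact Finset.mem_image.2 ⟨y₀, hyL', rfl⟩
  -- the pentagonal geometry
  have hpg : IsPentGeom NL k (R + q) := by
    refine ⟨hline_size, hdeg, ?_, ?_⟩
    · -- partial linearity
      intro x y hxy L hL hxL hyL M hM hxM hyM
      rcases Finset.mem_union.1 hL with h1 | h1 <;> rcases Finset.mem_union.1 hM with h2 | h2
      · have hcc : ∀ G ∈ Groups, ¬ (x ∈ G ∧ y ∈ G) := by
          intro G hG ⟨hxG, hyG⟩
          exact hGDD.within_pair x y hxy G hG hxG hyG L h1 ⟨hxL, hyL⟩
        exact (hGDD.cross_pair x y hxy hcc).unique ⟨h1, hxL, hyL⟩ ⟨h2, hxM, hyM⟩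
      · obtain ⟨G, hG, M', hM', rfl⟩ := (hGLmem M).1 h2
        exact absurd ⟨hxL, hyL⟩ (hGDD.within_pair x y hxy G hG
          (hline_sub G M' hxM) (hline_sub G M' hyM) L h1)
      · obtain ⟨G, hG, L', hL', rfl⟩ := (hGLmem L).1 h1
        exact absurd ⟨hxM, hyM⟩ (hGDD.within_pair x y hxy G hG
          (hline_sub G L' hxL) (hline_sub G L' hyL) M h2)
      · obtain ⟨G1, hG1, L', hL', rfl⟩ := (hGLmem L).1 h1
        obtain ⟨G2, hG2, M', hM', rfl⟩ := (hGLmem M).1 h2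
        have hGG : G1 = G2 := (hgrp_eq G1 hG1 x (hline_sub G1 L' hxL)).trans
          (hgrp_eq G2 hG2 x (hline_sub G2 M' hxM)).symm
        subst hGG
        obtain ⟨a, ha, hae⟩ := Finset.mem_image.1 hxL
        obtain ⟨b, hb, hbe⟩ := Finset.mem_image.1 hyL
        obtain ⟨a2, ha2, hae2⟩ := Finset.mem_image.1 hxM
        obtain ⟨b2, hb2, hbe2⟩ := Finset.mem_image.1 hyM
        have haa : a2 = a := hemb_inj G1 (by rw [hae2, hae])
        have hbb : b2 = b := hemb_inj G1 (by rw [hbe2, hbe])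
        have hab : a ≠ b := fun h => hxy (by rw [← hae, ← hbe, h])
        have := (hGL G1 hG1).1.plinear a b hab L' hL' ha hb M' hM'
          (haa ▸ ha2) (hbb ▸ hb2)
        rw [this]
    · -- opposite lines
      intro x
      obtain ⟨x₀, hx₀⟩ := hemb_surj (grp x) x (hgrp2 x)
      obtain ⟨L', hL', hopp⟩ := (hGL (grp x) (hgrp1 x)).1.opp x₀
      refine ⟨L'.image (emb (grp x)),
        Finset.mem_union_right _ ((hGLmem _).2 ⟨grp x, hgrp1 x, L', hL', rfl⟩), ?_⟩
      intro y
      constructor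
      · intro hy
        obtain ⟨y₀, hy₀, hye⟩ := Finset.mem_image.1 hy
        intro hc
        rw [← hx₀, ← hye] at hc
        exact ((hopp y₀).1 hy₀) (hCollin_pull (grp x) (hgrp1 x) x₀ y₀ hc)
      · intro hnc
        have hyG : y ∈ grp x := hnoncol_loc x y hnc
        obtain ⟨y₀, hy₀⟩ := hemb_surj (grp x) y hyG
        refine Finset.mem_image.2 ⟨y₀, (hopp y₀).2 ?_, hy₀⟩
        intro hc
        have := hCollin_push (grp x) (hgrp1 x) x₀ y₀ hc
        rw [hx₀, hy₀] at this
        exact hnc this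
  -- characterization of opposite line pairs
  have hpair_iff : ∀ L M : Finset (Fin T), IsOppPair NL L M ↔
      ∃ G ∈ Groups, ∃ L' M' : Finset (Fin G.card), IsOppPair (PG G) L' M' ∧
        L = L'.image (emb G) ∧ M = M'.image (emb G) := by
    intro L M
    constructor
    · rintro ⟨hL, hM, hdisj, h4, h5⟩
      have hLk : L.card = k := hline_size L hL
      have hMk : M.card = k := hline_size M hM
      have hLne : L.Nonempty := Finset.card_pos.1 (by omega)
      have hMne : M.Nonempty := Finset.card_pos.1 (by omega)
      have hnotblock : ∀ X Y : Finset (Fin T), X ∈ Blocks → Y.Nonempty →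
          (∀ x ∈ X, ∀ y ∈ Y, ¬ Collin NL x y) → False := by
        rintro X Y hX ⟨y, hy⟩ hXY
        have h2 : 1 < X.card := by rw [hGDD.block_size X hX]; omega
        obtain ⟨a, ha, b, hb, hab⟩ := Finset.one_lt_card.1 h2
        have hya : y ∈ grp a := hnoncol_loc a y (hXY a ha y hy)
        have hyb : y ∈ grp b := hnoncol_loc b y (hXY b hb y hy)
        have hge : grp a = grp b :=
          (hgrp_eq (grp a) (hgrp1 a) y hya).trans (hgrp_eq (grp b) (hgrp1 b) y hyb).symm
        have hbga : b ∈ grp a := by rw [hge]; exact hgrp2 b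
        exact hGDD.within_pair a b hab (grp a) (hgrp1 a) (hgrp2 a) hbga X hX ⟨ha, hb⟩
      have hLnb : L ∉ Blocks := fun hLb =>
        hnotblock L M hLb hMne (fun x hx y hy => (h4 x hx y).1 hy)
      have hMnb : M ∉ Blocks := fun hMb =>
        hnotblock M L hMb hLne (fun y hyM x hxL => (h5 y hyM x).1 hxL)
      have hLg : L ∈ GLines := (Finset.mem_union.1 hL).resolve_left hLnb
      have hMg : M ∈ GLines := (Finset.mem_union.1 hM).resolve_left hMnb
      obtain ⟨G1, hG1, L', hL', rfl⟩ := (hGLmem L).1 hLg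
      obtain ⟨G2, hG2, M', hM', rfl⟩ := (hGLmem M).1 hMg
      obtain ⟨x, hx⟩ := hLne
      obtain ⟨y, hy⟩ := hMne
      have hnc : ¬ Collin NL x y := (h4 x hx y).1 hy
      have hyg : y ∈ grp x := hnoncol_loc x y hnc
      have hg1 : G1 = grp x := hgrp_eq G1 hG1 x (hline_sub G1 L' hx)
      have hg2 : G2 = grp y := hgrp_eq G2 hG2 y (hline_sub G2 M' hy)
      have hgy : grp x = grp y := hgrp_eq (grp x) (hgrp1 x) y hyg
      have hGG : G2 = G1 := by rw [hg1, hg2, hgy]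
      subst hGG
      refine ⟨G2, hG1, L', M', ⟨hL', hM', ?_, ?_, ?_⟩, rfl, rfl⟩
      · rw [Finset.disjoint_left]
        intro a haL haM
        exact (Finset.disjoint_left.1 hdisj) (Finset.mem_image.2 ⟨a, haL, rfl⟩)
          (Finset.mem_image.2 ⟨a, haM, rfl⟩)
      · intro x₀ hx₀ y₀
        have hxm : emb G2 x₀ ∈ L'.image (emb G2) := Finset.mem_image.2 ⟨x₀, hx₀, rfl⟩
        constructor
        · intro hy₀ hc
          exact (h4 _ hxm _).1 (Finset.mem_image.2 ⟨y₀, hy₀, rfl⟩)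
            (hCollin_push G2 hG1 x₀ y₀ hc)
        · intro hnc'
          have h1 : ¬ Collin NL (emb G2 x₀) (emb G2 y₀) :=
            fun hc => hnc' (hCollin_pull G2 hG1 x₀ y₀ hc)
          obtain ⟨b, hb, hbe⟩ := Finset.mem_image.1 ((h4 _ hxm _).2 h1)
          rwa [← hemb_inj G2 hbe]
      · intro y₀ hy₀ x₀
        have hym : emb G2 y₀ ∈ M'.image (emb G2) := Finset.mem_image.2 ⟨y₀, hy₀, rfl⟩
        constructor
        · intro hx₀ hc
          exact (h5 _ hym _).1 (Finset.mem_image.2 ⟨x₀, hx₀, rfl⟩)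
            (hCollin_push G2 hG1 y₀ x₀ hc)
        · intro hnc'
          have h1 : ¬ Collin NL (emb G2 y₀) (emb G2 x₀) :=
            fun hc => hnc' (hCollin_pull G2 hG1 y₀ x₀ hc)
          obtain ⟨b, hb, hbe⟩ := Finset.mem_image.1 ((h5 _ hym _).2 h1)
          rwa [← hemb_inj G2 hbe]
    · rintro ⟨G, hG, L', M', ⟨hL', hM', hdisj', h4', h5'⟩, rfl, rfl⟩
      have hGgrp : ∀ j : Fin G.card, G = grp (emb G j) :=
        fun j => hgrp_eq G hG _ (hemb_mem G j)
      refine ⟨Finset.mem_union_right _ ((hGLmem _).2 ⟨G, hG, L', hL', rfl⟩),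
        Finset.mem_union_right _ ((hGLmem _).2 ⟨G, hG, M', hM', rfl⟩),
        (Finset.disjoint_image (hemb_inj G)).2 hdisj', ?_, ?_⟩
      · intro x hx y
        obtain ⟨x₀, hx₀, rfl⟩ := Finset.mem_image.1 hx
        constructor
        · intro hy hc
          obtain ⟨y₀, hy₀, rfl⟩ := Finset.mem_image.1 hy
          exact (h4' x₀ hx₀ y₀).1 hy₀ (hCollin_pull G hG x₀ y₀ hc)
        · intro hnc'
          have hyG : y ∈ G := by
            rw [hGgrp x₀]; exact hnoncol_loc _ y hnc'
          obtain ⟨y₀, rfl⟩ := hemb_surj G y hyG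
          refine Finset.mem_image.2 ⟨y₀, (h4' x₀ hx₀ y₀).2 ?_, rfl⟩
          exact fun hc => hnc' (hCollin_push G hG x₀ y₀ hc)
      · intro y hy x
        obtain ⟨y₀, hy₀, rfl⟩ := Finset.mem_image.1 hy
        constructor
        · intro hx hc
          obtain ⟨x₀, hx₀, rfl⟩ := Finset.mem_image.1 hx
          exact (h5' y₀ hy₀ x₀).1 hx₀ (hCollin_pull G hG y₀ x₀ hc)
        · intro hnc'
          have hxG : x ∈ G := by
            rw [hGgrp y₀]; exact hnoncol_loc _ x hnc'
          obtain ⟨x₀, rfl⟩ := hemb_surj G x hxG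
          refine Finset.mem_image.2 ⟨x₀, (h5' y₀ hy₀ x₀).2 ?_, rfl⟩
          exact fun hc => hnc' (hCollin_push G hG y₀ x₀ hc)
  -- counting opposite pairs
  have hcount : oppPairCount NL = ∑ i, u i * p i := by
    rw [oppPairCount_eq_card]
    have hfe : oppPairsFinset NL = Groups.biUnion (fun G =>
        (oppPairsFinset (PG G)).image (fun s => s.image (fun L' => L'.image (emb G)))) := by
      ext s
      simp only [mem_oppPairsFinset, Finset.mem_biUnion, Finset.mem_image]
      constructor
      · rintro ⟨L, M, rfl, hopp⟩
        obtain ⟨G, hG, L', M', hopp', rfl, rfl⟩ := (hpair_iff _ _).1 hopp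
        refine ⟨G, hG, {L', M'}, ⟨L', M', rfl, hopp'⟩, ?_⟩
        rw [Finset.image_insert, Finset.image_singleton]
      · rintro ⟨G, hG, s', ⟨L', M', rfl, hopp'⟩, rfl⟩
        refine ⟨L'.image (emb G), M'.image (emb G), ?_,
          (hpair_iff _ _).2 ⟨G, hG, L', M', hopp', rfl, rfl⟩⟩
        rw [Finset.image_insert, Finset.image_singleton]
    have hdj : ∀ G1 ∈ Groups, ∀ G2 ∈ Groups, G1 ≠ G2 →
        Disjoint ((oppPairsFinset (PG G1)).image (fun s => s.image (fun L' => L'.image (emb G1))))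
          ((oppPairsFinset (PG G2)).image (fun s => s.image (fun L' => L'.image (emb G2)))) := by
      intro G1 hG1 G2 hG2 hne
      rw [Finset.disjoint_left]
      intro s hs1 hs2
      obtain ⟨s1, hs1m, rfl⟩ := Finset.mem_image.1 hs1
      obtain ⟨L1, M1, rfl, hopp1⟩ := (mem_oppPairsFinset _ _).1 hs1m
      obtain ⟨s2, hs2m, hs2e⟩ := Finset.mem_image.1 hs2
      obtain ⟨L2, M2, rfl, hopp2⟩ := (mem_oppPairsFinset _ _).1 hs2m
      rw [Finset.image_insert, Finset.image_singleton] at hs2e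
      have hmem : L1.image (emb G1) ∈
          ({L2.image (emb G2), M2.image (emb G2)} : Finset (Finset (Fin T))) := by
        rw [hs2e]
        exact Finset.mem_image.2 ⟨L1, Finset.mem_insert_self _ _, rfl⟩
      have hL1k : L1.card = k := (hGL G1 hG1).1.line_size L1 hopp1.1
      have hL1ne : L1.Nonempty := Finset.card_pos.1 (by omega)
      obtain ⟨z0, hz0⟩ := hL1ne
      have hz1 : emb G1 z0 ∈ G1 := hemb_mem G1 z0
      have hz2 : emb G1 z0 ∈ G2 := by
        rcases Finset.mem_insert.1 hmem with h | h
        · exact hline_sub G2 L2 (h ▸ Finset.mem_image.2 ⟨z0, hz0, rfl⟩)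
        · rw [Finset.mem_singleton] at h
          exact hline_sub G2 M2 (h ▸ Finset.mem_image.2 ⟨z0, hz0, rfl⟩)
      exact hne ((hgrp_eq G1 hG1 _ hz1).trans (hgrp_eq G2 hG2 _ hz2).symm)
    rw [hfe, Finset.card_biUnion hdj]
    rw [← hsum_p]
    refine Finset.sum_congr rfl (fun G hG => ?_)
    rw [Finset.card_image_of_injective _
      (Finset.image_injective (Finset.image_injective (hemb_inj G)))]
    rw [← oppPairCount_eq_card]
    exact (hGL G hG).2
  exact ⟨NL, hpg, hcount⟩
end

section
/- Let g, u, q be positive integers with u ≤ q, let D be a set of non-negative integers such that for each d ∈ D there exists a 5-GDD of type g^u d^1, and suppose there exists a (u+1)-GDD of type q^{u+1} (a transversal design TD(u+1, q)). Then for every m that can be written as a sum of q elements of D (with repetition), there exists a 5-GDD of type (gq)^u m^1. -/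
set_option linter.unusedSectionVars false
set_option linter.unusedVariables false
set_option maxHeartbeats 1000000

namespace WilsonAux
variable {V : Type} [DecidableEq V] {k : ℕ} {Gs Bs : Finset (Finset V)}

lemma group_eq (h : IsGDD k Gs Bs) {G H : Finset V} (hG : G ∈ Gs) (hH : H ∈ Gs)
    {x : V} (hxG : x ∈ G) (hxH : x ∈ H) : G = H := by
  obtain ⟨G', _, hu⟩ := h.partition x
  rw [hu G ⟨hG, hxG⟩, hu H ⟨hH, hxH⟩]

lemma map_equiv {W : Type} [DecidableEq W] (e : V ≃ W) (h : IsGDD k Gs Bs) :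
    IsGDD k (Gs.map ⟨Finset.map e.toEmbedding, Finset.map_injective _⟩)
      (Bs.map ⟨Finset.map e.toEmbedding, Finset.map_injective _⟩) := by
  have hmem : ∀ (s : Finset V) (y : W), y ∈ s.map e.toEmbedding ↔ e.symm y ∈ s := by
    intro s y; exact Finset.mem_map_equiv
  constructor
  · intro y
    obtain ⟨G, ⟨hG, hxG⟩, hu⟩ := h.partition (e.symm y)
    refine ⟨G.map e.toEmbedding, ⟨Finset.mem_map_of_mem _ hG, (hmem G y).2 hxG⟩, ?_⟩
    rintro H ⟨hH, hyH⟩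
    simp only [Finset.mem_map] at hH
    obtain ⟨G', hG', rfl⟩ := hH
    exact congrArg _ (hu G' ⟨hG', (hmem G' y).1 hyH⟩)
  · exact Finset.Nonempty.map h.blocks_nonempty
  · intro B hB
    simp only [Finset.mem_map] at hB
    obtain ⟨B', hB', rfl⟩ := hB
    simpa using h.block_size B' hB'
  · intro x y hxy hcond
    have hxy' : e.symm x ≠ e.symm y := fun hc => hxy (by simpa using congrArg e hc)
    have hcond' : ∀ G ∈ Gs, ¬ (e.symm x ∈ G ∧ e.symm y ∈ G) := by
      intro G hG ⟨h1, h2⟩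
      exact hcond (G.map e.toEmbedding) (Finset.mem_map_of_mem _ hG)
        ⟨(hmem G x).2 h1, (hmem G y).2 h2⟩
    obtain ⟨B, ⟨hB, hxB, hyB⟩, hu⟩ := h.cross_pair _ _ hxy' hcond'
    refine ⟨B.map e.toEmbedding,
      ⟨Finset.mem_map_of_mem _ hB, (hmem B x).2 hxB, (hmem B y).2 hyB⟩, ?_⟩
    rintro C ⟨hC, hxC, hyC⟩
    simp only [Finset.mem_map] at hC
    obtain ⟨B', hB', rfl⟩ := hC
    exact congrArg _ (hu B' ⟨hB', (hmem B' x).1 hxC, (hmem B' y).1 hyC⟩)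
  · intro x y hxy H hH hxH hyH C hC ⟨hxC, hyC⟩
    simp only [Finset.mem_map] at hH hC
    obtain ⟨G, hG, rfl⟩ := hH
    obtain ⟨B, hB, rfl⟩ := hC
    have hxy' : e.symm x ≠ e.symm y := fun hc => hxy (by simpa using congrArg e hc)
    exact h.within_pair _ _ hxy' G hG ((hmem G x).1 hxH) ((hmem G y).1 hyH) B hB
      ⟨(hmem B x).1 hxC, (hmem B y).1 hyC⟩

omit [DecidableEq V] in
lemma map_equiv_cards {W : Type} [DecidableEq W] (e : V ≃ W) (s : Finset (Finset V)) :
    (s.map ⟨Finset.map e.toEmbedding, Finset.map_injective _⟩).val.map Finset.card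
      = s.val.map Finset.card := by
  simp [Finset.map_val, Multiset.map_map, Function.comp_def]


noncomputable def grp (h : IsGDD k Gs Bs) (x : V) : Finset V :=
  (h.partition x).exists.choose

lemma grp_mem (h : IsGDD k Gs Bs) (x : V) : grp h x ∈ Gs :=
  (h.partition x).exists.choose_spec.1

lemma mem_grp (h : IsGDD k Gs Bs) (x : V) : x ∈ grp h x :=
  (h.partition x).exists.choose_spec.2

lemma grp_eq (h : IsGDD k Gs Bs) {G : Finset V} {x : V} (hG : G ∈ Gs) (hx : x ∈ G) :
    grp h x = G :=
  group_eq h (grp_mem h x) hG (mem_grp h x) hx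

lemma block_inj (h : IsGDD k Gs Bs) {B : Finset V} (hB : B ∈ Bs) :
    ∀ a₁ a₂, a₁ ∈ B → a₂ ∈ B → grp h a₁ = grp h a₂ → a₁ = a₂ := by
  intro a₁ a₂ h1 h2 heq
  by_contra hne
  exact h.within_pair a₁ a₂ hne (grp h a₁) (grp_mem h a₁) (mem_grp h a₁)
    (heq ▸ mem_grp h a₂) B hB ⟨h1, h2⟩

lemma block_transversal (h : IsGDD k Gs Bs) (hcard : Gs.card = k) {B : Finset V}
    (hB : B ∈ Bs) {G : Finset V} (hG : G ∈ Gs) : ∃! x, x ∈ B ∧ x ∈ G := by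
  have hle : Gs.card ≤ B.card := by rw [hcard, h.block_size B hB]
  obtain ⟨a, ha, hGa⟩ := Finset.surj_on_of_inj_on_of_card_le (fun a _ => grp h a)
    (fun a ha => grp_mem h a) (fun a₁ a₂ ha₁ ha₂ => block_inj h hB a₁ a₂ ha₁ ha₂) hle G hG
  refine ⟨a, ⟨ha, hGa ▸ mem_grp h a⟩, ?_⟩
  rintro y ⟨hyB, hyG⟩
  exact block_inj h hB y a hyB ha (by rw [grp_eq h hG hyG, hGa])

lemma extract_card {u d g : ℕ} {s : Finset (Finset V)}
    (hs : s.val.map Finset.card = d ::ₘ Multiset.replicate u g) :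
    ∃ Gd ∈ s, Gd.card = d ∧ (s.erase Gd).val.map Finset.card = Multiset.replicate u g ∧
      (s.erase Gd).card = u ∧ (∀ G ∈ s.erase Gd, G.card = g) ∧ s.card = u + 1 := by
  have hd : d ∈ s.val.map Finset.card := by rw [hs]; exact Multiset.mem_cons_self _ _
  obtain ⟨Gd, hGd, hcd⟩ := Multiset.mem_map.1 hd
  have hcons : s.val = Gd ::ₘ s.val.erase Gd := (Multiset.cons_erase hGd).symm
  have herase : (s.val.erase Gd).map Finset.card = Multiset.replicate u g := by
    have : (Gd ::ₘ s.val.erase Gd).map Finset.card = d ::ₘ Multiset.replicate u g := by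
      rw [← hcons, hs]
    rw [Multiset.map_cons, hcd] at this
    exact (Multiset.cons_inj_right d).1 this
  have hval : (s.erase Gd).val = s.val.erase Gd := Finset.erase_val _ _
  refine ⟨Gd, hGd, hcd, by rw [hval]; exact herase, ?_, ?_, ?_⟩
  · have := congrArg Multiset.card herase
    rw [Multiset.card_map, Multiset.card_replicate] at this
    rw [Finset.card_def, hval]
    exact this
  · intro G hG
    have : G.card ∈ (s.val.erase Gd).map Finset.card := Multiset.mem_map_of_mem _ (by
      rwa [← hval, ← Finset.mem_def])
    rw [herase] at this
    exact Multiset.eq_of_mem_replicate this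
  · have := congrArg Multiset.card hs
    rw [Multiset.card_map, Multiset.card_cons, Multiset.card_replicate] at this
    rw [Finset.card_def, this]

variable {V₀ : Type} [DecidableEq V₀] {N : ℕ} {S T : Finset (Finset (Fin N))}

noncomputable def iota (hI : IsGDD k S T) (w : V₀ → ℕ) (pt : Finset (Fin N) → V₀)
    (hcard : ∀ G ∈ S, G.card = w (pt G)) (a : Fin N) : (x : V₀) × Fin (w x) :=
  ⟨pt (grp hI a), Fin.cast (hcard _ (grp_mem hI a)) ((grp hI a).equivFin ⟨a, mem_grp hI a⟩)⟩

lemma iota_fst (hI : IsGDD k S T) (w : V₀ → ℕ) (pt : Finset (Fin N) → V₀)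
    (hcard : ∀ G ∈ S, G.card = w (pt G)) (a : Fin N) :
    (iota hI w pt hcard a).1 = pt (grp hI a) := rfl

lemma iota_inj (hI : IsGDD k S T) (w : V₀ → ℕ) (pt : Finset (Fin N) → V₀)
    (hcard : ∀ G ∈ S, G.card = w (pt G))
    (hptinj : ∀ G ∈ S, ∀ H ∈ S, pt G = pt H → G = H) :
    Function.Injective (iota hI w pt hcard) := by
  intro a a' h
  have h1 : grp hI a = grp hI a' :=
    hptinj _ (grp_mem hI a) _ (grp_mem hI a') (congrArg Sigma.fst h)
  have key : ∀ (G G' : Finset (Fin N)) (hG : G ∈ S) (hG' : G' ∈ S)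
      (ha : a ∈ G) (ha' : a' ∈ G'), G = G' →
      (⟨pt G, Fin.cast (hcard G hG) (G.equivFin ⟨a, ha⟩)⟩ : (x : V₀) × Fin (w x)) =
        ⟨pt G', Fin.cast (hcard G' hG') (G'.equivFin ⟨a', ha'⟩)⟩ → a = a' := by
    rintro G G' hG hG' ha ha' rfl heq
    have h2 := eq_of_heq (Sigma.mk.inj_iff.mp heq).2
    have h4 : (G.equivFin ⟨a, ha⟩) = (G.equivFin ⟨a', ha'⟩) := by
      apply Fin.ext; simpa using congrArg Fin.val h2
    exact congrArg Subtype.val (G.equivFin.injective h4)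
  exact key _ _ (grp_mem hI a) (grp_mem hI a') (mem_grp hI a) (mem_grp hI a') h1 h


end WilsonAux

namespace WilsonAux
lemma block_construction {V₀ : Type} [DecidableEq V₀] [Fintype V₀]
    {g u : ℕ} (w : V₀ → ℕ) (B : Finset V₀) (x_B : V₀)
    (hxB : x_B ∈ B) (hBcard : B.card = u + 1)
    (hwB : ∀ x ∈ B.erase x_B, w x = g)
    {S T : Finset (Finset (Fin (g * u + w x_B)))}
    (hI : IsGDD 5 S T)
    (hScard : S.val.map Finset.card = w x_B ::ₘ Multiset.replicate u g) :
    ∃ LB : Finset (Finset ((x : V₀) × Fin (w x))),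
      LB.Nonempty ∧ (∀ C ∈ LB, C.card = 5) ∧
      (∀ C ∈ LB, ∀ p ∈ C, p.1 ∈ B) ∧
      (∀ p p' : (x : V₀) × Fin (w x), p.1 ∈ B → p'.1 ∈ B → p.1 ≠ p'.1 →
        ∃! C, C ∈ LB ∧ p ∈ C ∧ p' ∈ C) ∧
      (∀ p p' : (x : V₀) × Fin (w x), p ≠ p' → p.1 = p'.1 →
        ∀ C ∈ LB, ¬ (p ∈ C ∧ p' ∈ C)) := by
  classical
  obtain ⟨Gd, hGdS, hGdcard, _, hSrestu, hSrestg, hScard1⟩ := extract_card hScard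
  have hBrest : (B.erase x_B).card = u := by rw [Finset.card_erase_of_mem hxB, hBcard]; rfl
  have hcards : (S.erase Gd).card = (B.erase x_B).card := by rw [hSrestu, hBrest]
  set e₂ : {G // G ∈ S.erase Gd} ≃ {x // x ∈ B.erase x_B} := Finset.equivOfCardEq hcards with he₂
  set pt : Finset (Fin (g * u + w x_B)) → V₀ :=
    fun G => if h : G ∈ S.erase Gd then (e₂ ⟨G, h⟩ : V₀) else x_B with hpt
  have hptGd : pt Gd = x_B := dif_neg (Finset.notMem_erase _ _)
  have hptSrest : ∀ G (h : G ∈ S.erase Gd), pt G = (e₂ ⟨G, h⟩ : V₀) := fun G h => dif_pos h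
  have hGd_of : ∀ G ∈ S, G ∉ S.erase Gd → G = Gd := by
    intro G hG hnot
    by_contra hne
    exact hnot (Finset.mem_erase.2 ⟨hne, hG⟩)
  have hptB : ∀ G ∈ S, pt G ∈ B := by
    intro G hG
    by_cases h : G ∈ S.erase Gd
    · rw [hptSrest G h]; exact Finset.mem_of_mem_erase (e₂ ⟨G, h⟩).2
    · rw [hGd_of G hG h, hptGd]; exact hxB
  have hptcard : ∀ G ∈ S, G.card = w (pt G) := by
    intro G hG
    by_cases h : G ∈ S.erase Gd
    · rw [hptSrest G h, hwB _ (e₂ ⟨G, h⟩).2]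
      exact hSrestg G h
    · rw [hGd_of G hG h, hptGd, hGdcard]
  have hptinj : ∀ G ∈ S, ∀ H ∈ S, pt G = pt H → G = H := by
    intro G hG H hH hpq
    by_cases h1 : G ∈ S.erase Gd <;> by_cases h2 : H ∈ S.erase Gd
    · rw [hptSrest G h1, hptSrest H h2] at hpq
      exact congrArg Subtype.val (e₂.injective (Subtype.ext hpq))
    · rw [hptSrest G h1, hGd_of H hH h2, hptGd] at hpq
      exact absurd hpq (Finset.ne_of_mem_erase (e₂ ⟨G, h1⟩).2)
    · rw [hptSrest H h2, hGd_of G hG h1, hptGd] at hpq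
      exact absurd hpq.symm (Finset.ne_of_mem_erase (e₂ ⟨H, h2⟩).2)
    · rw [hGd_of G hG h1, hGd_of H hH h2]
  set ι := iota hI w pt hptcard with hι
  have hinj : Function.Injective ι := iota_inj hI w pt hptcard hptinj
  have hfstB : ∀ a, (ι a).1 ∈ B := fun a => hptB _ (grp_mem hI a)
  have hfst_iff : ∀ a a', (ι a).1 = (ι a').1 ↔ grp hI a = grp hI a' := by
    intro a a'
    constructor
    · intro h
      exact hptinj _ (grp_mem hI a) _ (grp_mem hI a') h
    · intro h
      show pt (grp hI a) = pt (grp hI a')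
      rw [h]
  have hcardsub : Fintype.card {p : (x : V₀) × Fin (w x) // p.1 ∈ B} = g * u + w x_B := by
    rw [Fintype.card_subtype]
    have hfil : (Finset.univ.filter (fun p : (x : V₀) × Fin (w x) => p.1 ∈ B))
        = B.sigma (fun x => Finset.univ) := by
      ext ⟨x, i⟩
      simp [Finset.mem_sigma]
    rw [hfil, Finset.card_sigma]
    simp only [Finset.card_univ, Fintype.card_fin]
    rw [← Finset.sum_erase_add B w hxB]
    have hsum : ∑ x ∈ B.erase x_B, w x = u * g := by
      rw [Finset.sum_congr rfl hwB, Finset.sum_const, hBrest, smul_eq_mul]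
    rw [hsum]
    ring
  have hbij : Function.Bijective (fun a : Fin (g * u + w x_B) =>
      (⟨ι a, hfstB a⟩ : {p : (x : V₀) × Fin (w x) // p.1 ∈ B})) := by
    rw [Fintype.bijective_iff_injective_and_card]
    exact ⟨fun a a' h => hinj (congrArg Subtype.val h), by simp [hcardsub]⟩
  have hsurj : ∀ p : (x : V₀) × Fin (w x), p.1 ∈ B → ∃ a, ι a = p := by
    intro p hp
    obtain ⟨a, ha⟩ := hbij.2 ⟨p, hp⟩
    exact ⟨a, congrArg Subtype.val ha⟩
  refine ⟨T.image (fun C => C.image ι), ?_, ?_, ?_, ?_, ?_⟩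
  · exact Finset.Nonempty.image hI.blocks_nonempty _
  · intro C hC
    obtain ⟨C₀, hC₀, rfl⟩ := Finset.mem_image.1 hC
    rw [Finset.card_image_of_injective _ hinj]
    exact hI.block_size C₀ hC₀
  · intro C hC p hp
    obtain ⟨C₀, hC₀, rfl⟩ := Finset.mem_image.1 hC
    obtain ⟨a, _, rfl⟩ := Finset.mem_image.1 hp
    exact hfstB a
  · intro p p' hpB hp'B hne
    obtain ⟨a, rfl⟩ := hsurj p hpB
    obtain ⟨a', rfl⟩ := hsurj p' hp'B
    have hano : a ≠ a' := fun h => hne (by rw [h])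
    have hnog : ∀ G ∈ S, ¬ (a ∈ G ∧ a' ∈ G) := by
      rintro G hG ⟨h1, h2⟩
      exact hne ((hfst_iff a a').2 (by rw [grp_eq hI hG h1, grp_eq hI hG h2]))
    obtain ⟨C₀, ⟨hC₀T, haC₀, ha'C₀⟩, hCuniq⟩ := hI.cross_pair a a' hano hnog
    refine ⟨C₀.image ι, ⟨Finset.mem_image_of_mem _ hC₀T, Finset.mem_image_of_mem _ haC₀,
      Finset.mem_image_of_mem _ ha'C₀⟩, ?_⟩
    rintro C ⟨hC, hpC, hp'C⟩
    obtain ⟨C₁, hC₁, rfl⟩ := Finset.mem_image.1 hC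
    obtain ⟨b, hb, hbe⟩ := Finset.mem_image.1 hpC
    obtain ⟨b', hb', hbe'⟩ := Finset.mem_image.1 hp'C
    rw [hinj hbe] at hb
    rw [hinj hbe'] at hb'
    rw [hCuniq C₁ ⟨hC₁, hb, hb'⟩]
  · rintro p p' hne hfst C hC ⟨hpC, hp'C⟩
    obtain ⟨C₁, hC₁, rfl⟩ := Finset.mem_image.1 hC
    obtain ⟨b, hb, rfl⟩ := Finset.mem_image.1 hpC
    obtain ⟨b', hb', hbe'⟩ := Finset.mem_image.1 hp'C
    subst hbe'
    have hgr : grp hI b = grp hI b' := (hfst_iff b b').1 hfst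
    have hbb' : b ≠ b' := fun h => hne (by rw [h])
    exact hI.within_pair b b' hbb' (grp hI b) (grp_mem hI b) (mem_grp hI b)
      (hgr ▸ mem_grp hI b') C₁ hC₁ ⟨hb, hb'⟩
end WilsonAux

namespace WilsonAux
lemma sigma_construction {V₀ : Type} [DecidableEq V₀] [Fintype V₀]
    (g u q : ℕ) (hg : 0 < g) (hq : 0 < q) (w : V₀ → ℕ)
    {Gs₀ Bs₀ : Finset (Finset V₀)} (hT : IsGDD (u + 1) Gs₀ Bs₀)
    (hGs₀card : Gs₀.card = u + 1)
    {Ginf : Finset V₀} (hGinf : Ginf ∈ Gs₀)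
    (hGq : ∀ G ∈ Gs₀, G.card = q)
    (hwg : ∀ x ∉ Ginf, w x = g)
    (hing : ∀ x ∈ Ginf, ∃ S T : Finset (Finset (Fin (g * u + w x))),
      IsGDD 5 S T ∧ S.val.map Finset.card = w x ::ₘ Multiset.replicate u g)
    (m : ℕ) (hm : ∑ x ∈ Ginf, w x = m) :
    ∃ Groups Blocks : Finset (Finset ((x : V₀) × Fin (w x))),
      IsGDD 5 Groups Blocks ∧
      Groups.val.map Finset.card = m ::ₘ Multiset.replicate u (g * q) := by
  classical
  have key : ∀ B ∈ Bs₀, ∃ LB : Finset (Finset ((x : V₀) × Fin (w x))),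
      LB.Nonempty ∧ (∀ C ∈ LB, C.card = 5) ∧
      (∀ C ∈ LB, ∀ p ∈ C, p.1 ∈ B) ∧
      (∀ p p' : (x : V₀) × Fin (w x), p.1 ∈ B → p'.1 ∈ B → p.1 ≠ p'.1 →
        ∃! C, C ∈ LB ∧ p ∈ C ∧ p' ∈ C) ∧
      (∀ p p' : (x : V₀) × Fin (w x), p ≠ p' → p.1 = p'.1 →
        ∀ C ∈ LB, ¬ (p ∈ C ∧ p' ∈ C)) := by
    intro B hB
    obtain ⟨x_B, ⟨hxB, hxGinf⟩, huniq⟩ := block_transversal hT hGs₀card hB hGinf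
    have hwB : ∀ x ∈ B.erase x_B, w x = g := by
      intro x hx
      obtain ⟨hne, hxB'⟩ := Finset.mem_erase.1 hx
      exact hwg x (fun hmem => hne (huniq x ⟨hxB', hmem⟩))
    obtain ⟨S, T, hI, hScard⟩ := hing x_B hxGinf
    exact block_construction w B x_B hxB (hT.block_size B hB) hwB hI hScard
  choose LB hLB using key
  set LG : Finset V₀ → Finset ((x : V₀) × Fin (w x)) :=
    fun G => G.sigma (fun x => (Finset.univ : Finset (Fin (w x)))) with hLG
  have hLGmem : ∀ (G : Finset V₀) (p : (x : V₀) × Fin (w x)), p ∈ LG G ↔ p.1 ∈ G := by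
    rintro G ⟨x, i⟩
    simp [hLG, Finset.mem_sigma]
  have hLGcard : ∀ G, (LG G).card = ∑ x ∈ G, w x := by
    intro G
    rw [hLG]
    rw [Finset.card_sigma]
    simp
  have hdisj : ∀ G ∈ Gs₀, ∀ x ∈ G, G ≠ Ginf → x ∉ Ginf :=
    fun G hG x hx hne hmem => hne (group_eq hT hG hGinf hx hmem)
  have hcardG : ∀ G ∈ Gs₀, G ≠ Ginf → (LG G).card = g * q := by
    intro G hG hne
    rw [hLGcard]
    have hconst : ∀ x ∈ G, w x = g := fun x hx => hwg x (hdisj G hG x hx hne)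
    rw [Finset.sum_congr rfl hconst, Finset.sum_const, hGq G hG, smul_eq_mul, mul_comm]
  have hcardGinf : (LG Ginf).card = m := by rw [hLGcard]; exact hm
  have haux : ∀ G' H', G' ∈ Gs₀ → H' ∈ Gs₀ → LG G' = LG H' → H' ≠ Ginf → G' = H' := by
    intro G' H' hG' hH' heq hne
    obtain ⟨x, hx⟩ : H'.Nonempty := Finset.card_pos.1 (by rw [hGq H' hH']; exact hq)
    have hwx : w x = g := hwg x (hdisj H' hH' x hx hne)
    have hp : (⟨x, ⟨0, by rw [hwx]; exact hg⟩⟩ : (x : V₀) × Fin (w x)) ∈ LG H' :=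
      (hLGmem H' _).2 hx
    rw [← heq] at hp
    exact group_eq hT hG' hH' ((hLGmem G' _).1 hp) hx
  have hLGinj : Set.InjOn LG Gs₀ := by
    intro G hG H hH heq
    rw [Finset.mem_coe] at hG hH
    by_cases hne : H = Ginf
    · subst hne
      by_cases hne2 : G = H
      · exact hne2
      · exact (haux H G hH hG heq.symm (fun hc => hne2 (hc ▸ rfl))).symm
    · exact haux G H hG hH heq hne
  have himg_val : (Gs₀.image LG).val = Gs₀.val.map LG := by
    rw [Finset.image_val, Multiset.dedup_eq_self.2]
    exact Multiset.Nodup.map_on (fun x hx y hy => hLGinj hx hy) Gs₀.nodup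
  refine ⟨Gs₀.image LG, Bs₀.attach.biUnion (fun B => LB B.1 B.2), ⟨?_, ?_, ?_, ?_, ?_⟩, ?_⟩
  · -- partition
    intro p
    obtain ⟨G, ⟨hG, hpG⟩, hu⟩ := hT.partition p.1
    refine ⟨LG G, ⟨Finset.mem_image_of_mem _ hG, (hLGmem G p).2 hpG⟩, ?_⟩
    rintro H ⟨hH, hpH⟩
    obtain ⟨G', hG', rfl⟩ := Finset.mem_image.1 hH
    exact congrArg LG (hu G' ⟨hG', (hLGmem G' p).1 hpH⟩)
  · -- nonempty
    obtain ⟨B, hB⟩ := hT.blocks_nonempty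
    obtain ⟨C, hC⟩ := (hLB B hB).1
    exact ⟨C, Finset.mem_biUnion.2 ⟨⟨B, hB⟩, Finset.mem_attach _ _, hC⟩⟩
  · -- size
    intro C hC
    obtain ⟨⟨B, hB⟩, -, hCB⟩ := Finset.mem_biUnion.1 hC
    exact (hLB B hB).2.1 C hCB
  · -- cross
    intro p p' hne hcond
    have hcond₀ : ∀ G ∈ Gs₀, ¬ (p.1 ∈ G ∧ p'.1 ∈ G) := by
      rintro G hG ⟨h1, h2⟩
      exact hcond (LG G) (Finset.mem_image_of_mem _ hG)
        ⟨(hLGmem G p).2 h1, (hLGmem G p').2 h2⟩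
    have hfst : p.1 ≠ p'.1 := by
      intro h
      exact hcond₀ (grp hT p.1) (grp_mem hT p.1) ⟨mem_grp hT p.1, h ▸ mem_grp hT p.1⟩
    obtain ⟨B₀, ⟨hB₀, hpB₀, hp'B₀⟩, hBuniq⟩ := hT.cross_pair p.1 p'.1 hfst hcond₀
    obtain ⟨C₀, ⟨hC₀, hpC₀, hp'C₀⟩, hCuniq⟩ := (hLB B₀ hB₀).2.2.2.1 p p' hpB₀ hp'B₀ hfst
    refine ⟨C₀, ⟨Finset.mem_biUnion.2 ⟨⟨B₀, hB₀⟩, Finset.mem_attach _ _, hC₀⟩, hpC₀, hp'C₀⟩, ?_⟩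
    rintro C ⟨hC, hpC, hp'C⟩
    obtain ⟨⟨B, hB⟩, -, hCB⟩ := Finset.mem_biUnion.1 hC
    have h1 : p.1 ∈ B := (hLB B hB).2.2.1 C hCB p hpC
    have h2 : p'.1 ∈ B := (hLB B hB).2.2.1 C hCB p' hp'C
    have hBB : B = B₀ := hBuniq B ⟨hB, h1, h2⟩
    subst hBB
    exact hCuniq C ⟨hCB, hpC, hp'C⟩
  · -- within
    rintro p p' hne H hH hpH hp'H C hC ⟨hpC, hp'C⟩
    obtain ⟨G, hG, rfl⟩ := Finset.mem_image.1 hH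
    obtain ⟨⟨B, hB⟩, -, hCB⟩ := Finset.mem_biUnion.1 hC
    by_cases hfst : p.1 = p'.1
    · exact (hLB B hB).2.2.2.2 p p' hne hfst C hCB ⟨hpC, hp'C⟩
    · exact hT.within_pair p.1 p'.1 hfst G hG ((hLGmem G p).1 hpH) ((hLGmem G p').1 hp'H)
        B hB ⟨(hLB B hB).2.2.1 C hCB p hpC, (hLB B hB).2.2.1 C hCB p' hp'C⟩
  · -- cardinalities
    rw [himg_val]
    have hGinfval : Ginf ∈ Gs₀.val := hGinf
    have hcons : Gs₀.val = Ginf ::ₘ Gs₀.val.erase Ginf := (Multiset.cons_erase hGinfval).symm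
    rw [hcons, Multiset.map_cons, Multiset.map_cons, Multiset.map_map, hcardGinf]
    congr 1
    apply Multiset.eq_replicate.2
    constructor
    · rw [Multiset.card_map, Multiset.card_erase_of_mem hGinfval]
      have : Gs₀.val.card = u + 1 := hGs₀card
      rw [this]
      rfl
    · intro b hb
      obtain ⟨G, hGmem, rfl⟩ := Multiset.mem_map.1 hb
      obtain ⟨hneq, hGval⟩ := (Multiset.Nodup.mem_erase_iff Gs₀.nodup).1 hGmem
      exact hcardG G hGval hneq
end WilsonAux

/-- Wilson's fundamental construction specialised: given 5-GDDs of type g^u d^1 for all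
d ∈ D and a transversal design TD(u+1, q) (a (u+1)-GDD of type q^{u+1}), for every m
expressible as a sum of q elements of D there is a 5-GDD of type (gq)^u m^1. -/
theorem gdd_td_construction (g u q : ℕ) (hg : 0 < g) (hu : 0 < u) (hq : 0 < q)
    (huq : u ≤ q) (D : Set ℕ)
    (hD : ∀ d ∈ D, ∃ Groups Blocks : Finset (Finset (Fin (g * u + d))),
      IsGDD 5 Groups Blocks ∧
      Groups.val.map Finset.card = d ::ₘ Multiset.replicate u g)
    (hTD : ∃ Groups Blocks : Finset (Finset (Fin (q * (u + 1)))),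
      IsGDD (u + 1) Groups Blocks ∧
      Groups.val.map Finset.card = Multiset.replicate (u + 1) q) :
    ∀ m : ℕ, (∃ f : Fin q → ℕ, (∀ i, f i ∈ D) ∧ ∑ i, f i = m) →
      ∃ Groups Blocks : Finset (Finset (Fin (g * q * u + m))),
        IsGDD 5 Groups Blocks ∧
        Groups.val.map Finset.card = m ::ₘ Multiset.replicate u (g * q) := by
  classical
  rintro m ⟨f, hfD, hfm⟩
  obtain ⟨Gs₀, Bs₀, hT, hc₀⟩ := hTD
  have hGs₀card : Gs₀.card = u + 1 := by
    have := congrArg Multiset.card hc₀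
    rw [Multiset.card_map, Multiset.card_replicate] at this
    exact this
  have hGq : ∀ G ∈ Gs₀, G.card = q := by
    intro G hG
    exact Multiset.eq_of_mem_replicate (by rw [← hc₀]; exact Multiset.mem_map_of_mem _ hG)
  obtain ⟨Ginf, hGinf⟩ : Gs₀.Nonempty := Finset.card_pos.1 (by rw [hGs₀card]; omega)
  have hGinfcard : Ginf.card = q := hGq Ginf hGinf
  set einf : {x // x ∈ Ginf} ≃ Fin q := Ginf.equivFin.trans (finCongr hGinfcard) with heinf
  set w : Fin (q * (u + 1)) → ℕ := fun x => if h : x ∈ Ginf then f (einf ⟨x, h⟩) else g with hw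
  have hwg : ∀ x ∉ Ginf, w x = g := fun x hx => dif_neg hx
  have hwin : ∀ x (h : x ∈ Ginf), w x = f (einf ⟨x, h⟩) := fun x h => dif_pos h
  have hing : ∀ x ∈ Ginf, ∃ S T : Finset (Finset (Fin (g * u + w x))),
      IsGDD 5 S T ∧ S.val.map Finset.card = w x ::ₘ Multiset.replicate u g := by
    intro x hx
    exact hD (w x) (by rw [hwin x hx]; exact hfD _)
  have hm : ∑ x ∈ Ginf, w x = m := by
    rw [← hfm, ← Finset.sum_attach Ginf w]
    have hbody : ∀ a ∈ Ginf.attach, w a.1 = f (einf a) := fun a _ => hwin a.1 a.2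
    rw [Finset.sum_congr rfl hbody, ← Finset.univ_eq_attach]
    exact Equiv.sum_comp einf f
  obtain ⟨Groups, Blocks, hGDD, hcards⟩ :=
    WilsonAux.sigma_construction g u q hg hq w hT hGs₀card hGinf hGq hwg hing m hm
  have hcardP : Fintype.card ((x : Fin (q * (u + 1))) × Fin (w x)) = g * q * u + m := by
    rw [Fintype.card_sigma]
    simp only [Fintype.card_fin]
    rw [← Finset.sum_add_sum_compl Ginf w, hm]
    have hcompl : ∀ x ∈ Ginfᶜ, w x = g := fun x hx => hwg x (by simpa using hx)
    rw [Finset.sum_congr rfl hcompl, Finset.sum_const, smul_eq_mul]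
    have hcc : Ginfᶜ.card = q * u := by
      rw [Finset.card_compl, hGinfcard]
      simp only [Fintype.card_fin]
      have hqu : q * (u + 1) = q * u + q := by ring
      rw [hqu, Nat.add_sub_cancel]
    rw [hcc]
    ring
  set e := Fintype.equivFinOfCardEq hcardP with he
  refine ⟨Groups.map ⟨Finset.map e.toEmbedding, Finset.map_injective _⟩,
    Blocks.map ⟨Finset.map e.toEmbedding, Finset.map_injective _⟩,
    WilsonAux.map_equiv e hGDD, ?_⟩
  rw [WilsonAux.map_equiv_cards, hcards]
end

section
/- Removing a point x together with its opposite line x^opp (and deleting x from all lines through it) from a pentagonal geometry PENT(k, k) with k > 2 yields a pentagonal geometry PENT(k−1, k). -/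
lemma collin_symm {P : Type} [DecidableEq P] {Lines : Finset (Finset P)} {a b : P}
    (h : Collin Lines a b) : Collin Lines b a := by
  rcases h with rfl | ⟨G, hG, h1, h2⟩
  · exact Or.inl rfl
  · exact Or.inr ⟨G, hG, h2, h1⟩

lemma inter_card_le {P : Type} [DecidableEq P] {Lines : Finset (Finset P)} {k r : ℕ}
    (h : IsPentGeom Lines k r) {M N : Finset P} (hM : M ∈ Lines) (hN : N ∈ Lines)
    (hne : M ≠ N) : (M ∩ N).card ≤ 1 := by
  by_contra hc
  push_neg at hc
  obtain ⟨a, ha, b, hb, hab⟩ := Finset.one_lt_card.mp hc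
  simp only [Finset.mem_inter] at ha hb
  exact hne (h.plinear a b hab M hM ha.1 hb.1 N hN ha.2 hb.2)

/-- Key lemma: any line not through `x` and different from `x^opp = L`
meets `L` in exactly one point. -/
lemma key_meets {P : Type} [DecidableEq P] {Lines : Finset (Finset P)} {k : ℕ} (hk : 2 < k)
    (h : IsPentGeom Lines k k) (x : P) (L : Finset P) (hL : L ∈ Lines)
    (hopp : ∀ y : P, y ∈ L ↔ ¬ Collin Lines x y)
    {M : Finset P} (hM : M ∈ Lines) (hMx : x ∉ M) (hML : M ≠ L) :
    (M ∩ L).card = 1 := by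
  classical
  have hsymm : ∀ a b : P, Collin Lines a b → Collin Lines b a := fun a b => collin_symm
  have hle : (M ∩ L).card ≤ 1 := inter_card_le h hM hL hML
  rcases Nat.lt_or_ge (M ∩ L).card 1 with hlt | hge
  swap
  · omega
  -- Assume M ∩ L = ∅ and derive a contradiction.
  have hdis : ∀ z ∈ M, z ∉ L := by
    intro z hz hzL
    have : z ∈ M ∩ L := Finset.mem_inter.mpr ⟨hz, hzL⟩
    have := Finset.card_pos.mpr ⟨z, this⟩
    omega
  -- choice function: a line through x and z
  have hcol : ∀ z ∈ M, ∃ G ∈ Lines, x ∈ G ∧ z ∈ G := by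
    intro z hz
    have hzL := hdis z hz
    have hcz : Collin Lines x z := by
      by_contra hcz
      exact hzL ((hopp z).mpr hcz)
    rcases hcz with rfl | ⟨G, hG, h1, h2⟩
    · exact absurd hz hMx
    · exact ⟨G, hG, h1, h2⟩
  set f : P → Finset P := fun z =>
    if hz : ∃ G ∈ Lines, x ∈ G ∧ z ∈ G then hz.choose else ∅ with hf
  have hfspec : ∀ z ∈ M, f z ∈ Lines ∧ x ∈ f z ∧ z ∈ f z := by
    intro z hz
    have hex := hcol z hz
    simp only [hf, dif_pos hex]
    obtain ⟨h1, h2, h3⟩ := hex.choose_spec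
    exact ⟨h1, h2, h3⟩
  set T : Finset (Finset P) := Lines.filter (fun G => x ∈ G) with hTdef
  have hT : T.card = k := h.point_deg x
  have hmaps : ∀ z (hz : z ∈ M), f z ∈ T := by
    intro z hz
    obtain ⟨h1, h2, _⟩ := hfspec z hz
    exact Finset.mem_filter.mpr ⟨h1, h2⟩
  have hinj : ∀ z₁ z₂ (h1 : z₁ ∈ M) (h2 : z₂ ∈ M), f z₁ = f z₂ → z₁ = z₂ := by
    intro z₁ z₂ h1 h2 heq
    by_contra hne
    obtain ⟨hG1, hx1, hz1⟩ := hfspec z₁ h1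
    obtain ⟨_, _, hz2⟩ := hfspec z₂ h2
    rw [heq] at hz1
    have := h.plinear z₁ z₂ hne (f z₂) (heq ▸ hG1) hz1 hz2 M hM h1 h2
    rw [← this] at hMx
    rw [heq] at hx1
    exact hMx hx1
  have hcard_le : T.card ≤ M.card := by rw [hT, h.line_size M hM]
  have hsurj := Finset.surj_on_of_inj_on_of_card_le (fun z _ => f z) hmaps hinj hcard_le
  -- step (b): every y ∈ L is collinear with exactly k-1 points of M
  have hb : ∀ y ∈ L, (M.filter (fun z => Collin Lines y z)).card = k - 1 := by
    intro y hy
    obtain ⟨N, hN, hNopp⟩ := h.opp y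
    have hxN : x ∈ N := by
      refine (hNopp x).mpr ?_
      intro hc
      exact (hopp y).mp hy (hsymm _ _ hc)
    obtain ⟨z, hzM, hzN⟩ := hsurj N (Finset.mem_filter.mpr ⟨hN, hxN⟩)
    have hzN' : N = f z := hzN
    have hzfN : z ∈ N := by
      rw [hzN']
      exact (hfspec z hzM).2.2
    have hNM : N ≠ M := fun hc => hMx (hc ▸ hxN)
    have hNMcard : (M ∩ N).card = 1 := by
      have h1 : (M ∩ N).card ≤ 1 := inter_card_le h hM hN (fun hc => hNM hc.symm)
      have h2 : 0 < (M ∩ N).card :=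
        Finset.card_pos.mpr ⟨z, Finset.mem_inter.mpr ⟨hzM, hzfN⟩⟩
      omega
    have hfilt : M.filter (fun z => ¬ Collin Lines y z) = M ∩ N := by
      ext w
      simp only [Finset.mem_filter, Finset.mem_inter]
      exact and_congr_right fun _ => (hNopp w).symm
    have hsum := Finset.card_filter_add_card_filter_not
      (s := M) (fun z => Collin Lines y z)
    rw [hfilt, hNMcard, h.line_size M hM] at hsum
    omega
  -- step (c): every z ∈ M is collinear with at most k-2 points of L
  have hc : ∀ z ∈ M, (L.filter (fun y => Collin Lines z y)).card ≤ k - 2 := by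
    intro z hz
    obtain ⟨hfzL, hxfz, hzfz⟩ := hfspec z hz
    set g : P → Finset P := fun y =>
      if hy : ∃ H ∈ Lines, z ∈ H ∧ y ∈ H then hy.choose else ∅ with hg
    have hgspec : ∀ y ∈ L.filter (fun y => Collin Lines z y),
        g y ∈ Lines ∧ z ∈ g y ∧ y ∈ g y := by
      intro y hy
      rw [Finset.mem_filter] at hy
      have hyz : z ≠ y := fun hc => hdis z hz (hc ▸ hy.1)
      have hex : ∃ H ∈ Lines, z ∈ H ∧ y ∈ H := by
        rcases hy.2 with hc | ⟨H, hH, h1, h2⟩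
        · exact absurd hc hyz
        · exact ⟨H, hH, h1, h2⟩
      simp only [hg, dif_pos hex]
      obtain ⟨h1, h2, h3⟩ := hex.choose_spec
      exact ⟨h1, h2, h3⟩
    set S : Finset (Finset P) :=
      ((Lines.filter (fun H => z ∈ H)).erase M).erase (f z) with hS
    have hfzM : f z ≠ M := fun hc => hMx (hc ▸ hxfz)
    have hScard : S.card = k - 2 := by
      have h1 : M ∈ Lines.filter (fun H => z ∈ H) := Finset.mem_filter.mpr ⟨hM, hz⟩
      have h2 : f z ∈ (Lines.filter (fun H => z ∈ H)).erase M :=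
        Finset.mem_erase.mpr ⟨hfzM, Finset.mem_filter.mpr ⟨hfzL, hzfz⟩⟩
      rw [hS, Finset.card_erase_of_mem h2, Finset.card_erase_of_mem h1, h.point_deg z]
      omega
    have hgmaps : ∀ y ∈ L.filter (fun y => Collin Lines z y), g y ∈ S := by
      intro y hy
      obtain ⟨h1, h2, h3⟩ := hgspec y hy
      rw [Finset.mem_filter] at hy
      refine Finset.mem_erase.mpr ⟨?_, Finset.mem_erase.mpr ⟨?_, Finset.mem_filter.mpr ⟨h1, h2⟩⟩⟩
      · intro hc
        rw [hc] at h3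
        exact (hopp y).mp hy.1 (Or.inr ⟨f z, hfzL, hxfz, h3⟩)
      · intro hc
        rw [hc] at h3
        exact hdis y h3 hy.1
    have hginj : Set.InjOn g (L.filter (fun y => Collin Lines z y)) := by
      intro y₁ hy₁ y₂ hy₂ heq
      simp only [Finset.coe_filter, Set.mem_setOf_eq] at hy₁ hy₂
      by_contra hne
      obtain ⟨hG1, hz1, hm1⟩ := hgspec y₁ (Finset.mem_filter.mpr hy₁)
      obtain ⟨_, _, hm2⟩ := hgspec y₂ (Finset.mem_filter.mpr hy₂)
      rw [heq] at hm1
      have := h.plinear y₁ y₂ hne (g y₂) (heq ▸ hG1) hm1 hm2 L hL hy₁.1 hy₂.1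
      have hzL : z ∈ L := this ▸ (heq ▸ hz1)
      exact hdis z hz hzL
    calc (L.filter (fun y => Collin Lines z y)).card ≤ S.card :=
          Finset.card_le_card_of_injOn g (fun y hy => hgmaps y hy) hginj
      _ = k - 2 := hScard
  -- double count
  have e1 : ∑ y ∈ L, (M.filter (fun z => Collin Lines y z)).card = k * (k - 1) := by
    rw [Finset.sum_congr rfl hb, Finset.sum_const, h.line_size L hL, smul_eq_mul]
  have e2 : ∑ z ∈ M, (L.filter (fun y => Collin Lines z y)).card ≤ k * (k - 2) := by
    calc ∑ z ∈ M, (L.filter (fun y => Collin Lines z y)).card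
        ≤ ∑ _z ∈ M, (k - 2) := Finset.sum_le_sum hc
      _ = k * (k - 2) := by rw [Finset.sum_const, h.line_size M hM, smul_eq_mul]
  have e3 : ∑ y ∈ L, (M.filter (fun z => Collin Lines y z)).card
      = ∑ z ∈ M, (L.filter (fun y => Collin Lines z y)).card := by
    simp only [Finset.card_filter]
    rw [Finset.sum_comm]
    refine Finset.sum_congr rfl fun z _ => Finset.sum_congr rfl fun y _ => ?_
    congr 1
    exact propext ⟨hsymm y z, hsymm z y⟩
  rw [e3, ] at e1
  have : k * (k - 1) ≤ k * (k - 2) := e1 ▸ e2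
  have hk0 : 0 < k := by omega
  have := Nat.le_of_mul_le_mul_left this hk0
  omega

/-- Removing a point x and its opposite line x^opp from a PENT(k, k) with k > 2
(deleting x and all points of x^opp, dropping the line x^opp, and truncating every
remaining line to the surviving points) yields a PENT(k-1, k). -/
theorem pent_remove_point_opp {P : Type} [Fintype P] [DecidableEq P]
    {Lines : Finset (Finset P)} {k : ℕ} (hk : 2 < k)
    (h : IsPentGeom Lines k k) (x : P) (L : Finset P) (hL : L ∈ Lines)
    (hopp : ∀ y : P, y ∈ L ↔ ¬ Collin Lines x y) :
    IsPentGeom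
      ((Lines.erase L).image (fun M => M.subtype (fun p => p ∉ insert x L)))
      (k - 1) k := by
  classical
  set tr : Finset P → Finset {p : P // p ∉ insert x L} :=
    fun M => M.subtype (fun p => p ∉ insert x L) with htr
  set NL : Finset (Finset {p : P // p ∉ insert x L}) := (Lines.erase L).image tr with hNL
  have hxL : x ∉ L := by
    intro hc
    exact (hopp x).mp hc (Or.inl rfl)
  -- each surviving line loses exactly one point
  have hone : ∀ M ∈ Lines.erase L, (M.filter (fun p => p ∈ insert x L)).card = 1 := by
    intro M hMe
    obtain ⟨hML, hM⟩ := Finset.mem_erase.mp hMe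
    by_cases hxM : x ∈ M
    · have : M.filter (fun p => p ∈ insert x L) = {x} := by
        ext w
        simp only [Finset.mem_filter, Finset.mem_insert, Finset.mem_singleton]
        constructor
        · rintro ⟨hwM, rfl | hwL⟩
          · rfl
          · exact absurd (Or.inr ⟨M, hM, hxM, hwM⟩) ((hopp w).mp hwL)
        · rintro rfl
          exact ⟨hxM, Or.inl rfl⟩
      rw [this, Finset.card_singleton]
    · have hkey := key_meets hk h x L hL hopp hM hxM hML
      have : M.filter (fun p => p ∈ insert x L) = M ∩ L := by
        ext w
        simp only [Finset.mem_filter, Finset.mem_insert, Finset.mem_inter]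
        constructor
        · rintro ⟨hwM, rfl | hwL⟩
          · exact absurd hwM hxM
          · exact ⟨hwM, hwL⟩
        · rintro ⟨hwM, hwL⟩
          exact ⟨hwM, Or.inr hwL⟩
      rw [this, hkey]
  have hsize : ∀ M ∈ Lines.erase L, (tr M).card = k - 1 := by
    intro M hMe
    obtain ⟨hML, hM⟩ := Finset.mem_erase.mp hMe
    have hsum := Finset.card_filter_add_card_filter_not
      (s := M) (fun p => p ∈ insert x L)
    rw [hone M hMe, h.line_size M hM] at hsum
    rw [htr]
    simp only [Finset.card_subtype]
    omega
  -- truncation is injective on the surviving lines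
  have htrinj : ∀ M ∈ Lines.erase L, ∀ N ∈ Lines.erase L, tr M = tr N → M = N := by
    intro M hMe N hNe heq
    have hc : (tr M).card = k - 1 := hsize M hMe
    have h2 : 1 < (tr M).card := by omega
    obtain ⟨a, ha, b, hb, hab⟩ := Finset.one_lt_card.mp h2
    have haN := heq ▸ ha
    have hbN := heq ▸ hb
    rw [htr] at ha hb haN hbN
    simp only [Finset.mem_subtype] at ha hb haN hbN
    obtain ⟨hML, hM⟩ := Finset.mem_erase.mp hMe
    obtain ⟨hNL, hN⟩ := Finset.mem_erase.mp hNe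
    exact h.plinear a.val b.val (fun hc => hab (Subtype.ext hc)) M hM ha hb N hN haN hbN
  -- collinearity in the new geometry matches the old one on surviving points
  have hcollin : ∀ (p q : {p : P // p ∉ insert x L}),
      Collin NL p q ↔ Collin Lines p.val q.val := by
    intro p q
    constructor
    · rintro (rfl | ⟨A, hA, hpA, hqA⟩)
      · exact Or.inl rfl
      · rw [hNL] at hA
        obtain ⟨M, hMe, rfl⟩ := Finset.mem_image.mp hA
        rw [htr] at hpA hqA
        simp only [Finset.mem_subtype] at hpA hqA
        exact Or.inr ⟨M, (Finset.mem_erase.mp hMe).2, hpA, hqA⟩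
    · rintro (hpq | ⟨M, hM, hpM, hqM⟩)
      · exact Or.inl (Subtype.ext hpq)
      · have hML : M ≠ L := fun hc => p.prop (Finset.mem_insert_of_mem (hc ▸ hpM))
        refine Or.inr ⟨tr M, ?_, ?_, ?_⟩
        · exact Finset.mem_image_of_mem tr (Finset.mem_erase.mpr ⟨hML, hM⟩)
        · rw [htr]; exact Finset.mem_subtype.mpr hpM
        · rw [htr]; exact Finset.mem_subtype.mpr hqM
  refine ⟨?_, ?_, ?_, ?_⟩
  · -- line_size
    intro A hA
    obtain ⟨M, hMe, rfl⟩ := Finset.mem_image.mp hA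
    exact hsize M hMe
  · -- point_deg
    intro p
    have himg : NL.filter (fun A => p ∈ A)
        = ((Lines.erase L).filter (fun M => p.val ∈ M)).image tr := by
      ext A
      simp only [Finset.mem_filter, Finset.mem_image, hNL]
      constructor
      · rintro ⟨⟨M, hMe, rfl⟩, hpA⟩
        refine ⟨M, ⟨hMe, ?_⟩, rfl⟩
        rw [htr] at hpA
        exact Finset.mem_subtype.mp hpA
      · rintro ⟨M, ⟨hMe, hpM⟩, rfl⟩
        exact ⟨⟨M, hMe, rfl⟩, by rw [htr]; exact Finset.mem_subtype.mpr hpM⟩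
    have hfe : (Lines.erase L).filter (fun M => p.val ∈ M)
        = Lines.filter (fun M => p.val ∈ M) := by
      ext M
      simp only [Finset.mem_filter, Finset.mem_erase]
      constructor
      · rintro ⟨⟨_, hM⟩, hp⟩; exact ⟨hM, hp⟩
      · rintro ⟨hM, hp⟩
        refine ⟨⟨?_, hM⟩, hp⟩
        rintro rfl
        exact p.prop (Finset.mem_insert_of_mem hp)
    rw [himg, Finset.card_image_of_injOn, hfe, h.point_deg]
    intro M hM N hN heq
    simp only [Finset.coe_filter, Set.mem_setOf_eq] at hM hN
    have hMe : M ∈ Lines.erase L := hM.1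
    have hNe : N ∈ Lines.erase L := hN.1
    exact htrinj M hMe N hNe heq
  · -- plinear
    intro p q hpq A hA hpA hqA B hB hpB hqB
    obtain ⟨M, hMe, rfl⟩ := Finset.mem_image.mp hA
    obtain ⟨N, hNe, rfl⟩ := Finset.mem_image.mp hB
    rw [htr] at hpA hqA hpB hqB
    simp only [Finset.mem_subtype] at hpA hqA hpB hqB
    have := h.plinear p.val q.val (fun hc => hpq (Subtype.ext hc))
      M (Finset.mem_erase.mp hMe).2 hpA hqA N (Finset.mem_erase.mp hNe).2 hpB hqB
    rw [this]
  · -- opp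
    intro p
    obtain ⟨N, hN, hNopp⟩ := h.opp p.val
    have hpx : p.val ≠ x := fun hc => p.prop (by rw [hc]; exact Finset.mem_insert_self x L)
    have hpL : p.val ∉ L := fun hc => p.prop (Finset.mem_insert_of_mem hc)
    -- N ≠ L
    have hNL' : N ≠ L := by
      intro hc
      subst hc
      -- then p and x have the same opposite line; derive a contradiction
      have hcx : Collin Lines p.val x := by
        by_contra hcc
        exact hxL ((hNopp x).mpr hcc)
      obtain ⟨G, hG, hpG, hxG⟩ : ∃ G ∈ Lines, p.val ∈ G ∧ x ∈ G := by
        rcases hcx with hc | ⟨G, hG, h1, h2⟩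
        · exact absurd hc hpx
        · exact ⟨G, hG, h1, h2⟩
      -- pick another line H through p, H ≠ G
      have hdeg : (Lines.filter (fun M => p.val ∈ M)).card = k := h.point_deg p.val
      have hGmem : G ∈ Lines.filter (fun M => p.val ∈ M) := Finset.mem_filter.mpr ⟨hG, hpG⟩
      have h2 : 1 < (Lines.filter (fun M => p.val ∈ M)).card := by omega
      obtain ⟨a, ha, b, hb, hab⟩ := Finset.one_lt_card.mp h2
      have : ∃ H ∈ Lines.filter (fun M => p.val ∈ M), H ≠ G := by
        by_cases haG : a = G
        · exact ⟨b, hb, fun hc => hab (haG.trans hc.symm)⟩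
        · exact ⟨a, ha, haG⟩
      obtain ⟨H, hHmem, hHG⟩ := this
      obtain ⟨hH, hpH⟩ := Finset.mem_filter.mp hHmem
      have hHL : H ≠ N := fun hc => hpL (hc ▸ hpH)
      have hxH : x ∉ H := by
        intro hxH
        exact hHG (h.plinear p.val x hpx H hH hpH hxH G hG hpG hxG)
      have hkey := key_meets hk h x N hN hopp hH hxH hHL
      have : 0 < (H ∩ N).card := by omega
      obtain ⟨y, hy⟩ := Finset.card_pos.mp this
      rw [Finset.mem_inter] at hy
      exact (hNopp y).mp hy.2 (Or.inr ⟨H, hH, hpH, hy.1⟩)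
    have hNe : N ∈ Lines.erase L := Finset.mem_erase.mpr ⟨hNL', hN⟩
    refine ⟨tr N, Finset.mem_image_of_mem tr hNe, ?_⟩
    intro q
    rw [htr, Finset.mem_subtype, hNopp q.val]
    exact not_congr (hcollin p q).symm
end

section
/- Suppose there exists a PENT(5, r) with r ≡ 0 (mod 5) and a 5-GDD of type (4r+6)^{10t+1} for some t ≥ 0, together with a degenerate PENT(5, r) structure filled into each group. Then there exists a PENT(5, (10r + 15)t + r). More precisely: if a PENT(5, r) exists and a 5-GDD of type v^u exists with v = 4r + 6, then a PENT(5, u·r + 3(u−1)/2) exists whenever u is odd. -/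
/-- an embedding of `Fin n` onto a finset of card `n`. -/
noncomputable def embOf {V : Type} (n : ℕ) (G : Finset V) (h : G.card = n) : Fin n ↪ V :=
  ⟨fun i => ((G.equivFinOfCardEq h).symm i : V),
   fun a b hab => (G.equivFinOfCardEq h).symm.injective (Subtype.ext hab)⟩

lemma embOf_mem {V : Type} {n : ℕ} {G : Finset V} (h : G.card = n) (i : Fin n) :
    embOf n G h i ∈ G := ((G.equivFinOfCardEq h).symm i).2

lemma embOf_surj {V : Type} {n : ℕ} {G : Finset V} (h : G.card = n) {y : V} (hy : y ∈ G) :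
    ∃ i, embOf n G h i = y := ⟨G.equivFinOfCardEq h ⟨y, hy⟩, by
      show ((G.equivFinOfCardEq h).symm (G.equivFinOfCardEq h ⟨y, hy⟩) : V) = y; simp⟩

theorem pent_construct {V : Type} [DecidableEq V] [Fintype V] (r s : ℕ)
    (Lines0 : Finset (Finset (Fin (4*r+6)))) (hp : IsPentGeom Lines0 5 r)
    (Groups Blocks : Finset (Finset V)) (hg : IsGDD 5 Groups Blocks)
    (hcard : ∀ G ∈ Groups, G.card = 4*r+6)
    (huniv : Fintype.card V = (4*r+6) * (2*s+1)) :
    ∃ Lines : Finset (Finset V), IsPentGeom Lines 5 ((2*s+1)*r + 3*s) := by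
  classical
  -- the pentagonal lines inside a group
  set Pent : Finset V → Finset (Finset V) := fun G =>
    if h : G.card = 4*r+6 then Lines0.image (fun L => L.map (embOf _ G h)) else ∅ with hPent
  set NewLines : Finset (Finset V) := Blocks ∪ Groups.biUnion Pent with hNew
  -- membership characterization of Pent G for G ∈ Groups
  have memPent : ∀ G (hG : G ∈ Groups) (L : Finset V),
      L ∈ Pent G ↔ ∃ L0 ∈ Lines0, L = L0.map (embOf _ G (hcard G hG)) := by
    intro G hG L
    simp only [hPent, dif_pos (hcard G hG), Finset.mem_image]
    constructor
    · rintro ⟨L0, h0, rfl⟩; exact ⟨L0, h0, rfl⟩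
    · rintro ⟨L0, h0, rfl⟩; exact ⟨L0, h0, rfl⟩
  -- pent lines are inside the group
  have pentsub : ∀ G (hG : G ∈ Groups), ∀ L ∈ Pent G, L ⊆ G := by
    intro G hG L hL y hy
    obtain ⟨L0, h0, rfl⟩ := (memPent G hG L).1 hL
    obtain ⟨i, _, rfl⟩ := Finset.mem_map.1 hy
    exact embOf_mem _ i
  -- groups are unique
  have grpuniq : ∀ (x : V) (G G' : Finset V), G ∈ Groups → G' ∈ Groups → x ∈ G → x ∈ G' →
      G = G' := by
    intro x G G' hG hG' hx hx'
    obtain ⟨H, -, hun⟩ := hg.partition x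
    rw [hun G ⟨hG, hx⟩, hun G' ⟨hG', hx'⟩]
  -- no two points of a block in a common group
  have blkcross : ∀ B ∈ Blocks, ∀ x ∈ B, ∀ y ∈ B, x ≠ y →
      ∀ G ∈ Groups, ¬ (x ∈ G ∧ y ∈ G) := by
    intro B hB x hx y hy hxy G hG ⟨hxG, hyG⟩
    exact hg.within_pair x y hxy G hG hxG hyG B hB ⟨hx, hy⟩
  -- blocks are not pent lines
  have blockNotPent : ∀ B ∈ Blocks, ∀ G ∈ Groups, B ∉ Pent G := by
    intro B hB G hG hBP
    have hsub := pentsub G hG B hBP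
    have h2 : 1 < B.card := by rw [hg.block_size B hB]; norm_num
    obtain ⟨x, hx, y, hy, hxy⟩ := Finset.one_lt_card.1 h2
    exact blkcross B hB x hx y hy hxy G hG ⟨hsub hx, hsub hy⟩
  -- sizes
  have lsize : ∀ L ∈ NewLines, L.card = 5 := by
    intro L hL
    rcases Finset.mem_union.1 hL with h | h
    · exact hg.block_size L h
    · obtain ⟨G, hG, hLP⟩ := Finset.mem_biUnion.1 h
      obtain ⟨L0, h0, rfl⟩ := (memPent G hG L).1 hLP
      rw [Finset.card_map]; exact hp.line_size L0 h0

  -- point degrees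
  have deg : ∀ x : V, (NewLines.filter (fun L => x ∈ L)).card = (2*s+1)*r + 3*s := by
    intro x
    obtain ⟨Gx, ⟨hGx, hxGx⟩, -⟩ := hg.partition x
    obtain ⟨i, hi⟩ := embOf_surj (hcard Gx hGx) hxGx
    have hdisj : Disjoint (Blocks.filter (fun L => x ∈ L))
        ((Groups.biUnion Pent).filter (fun L => x ∈ L)) := by
      rw [Finset.disjoint_left]
      intro L hL hL'
      obtain ⟨G, hG, hLP⟩ := Finset.mem_biUnion.1 (Finset.mem_filter.1 hL').1
      exact blockNotPent L (Finset.mem_filter.1 hL).1 G hG hLP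
    rw [hNew, Finset.filter_union, Finset.card_union_of_disjoint hdisj]
    have hpent1 : (Groups.biUnion Pent).filter (fun L => x ∈ L)
        = (Lines0.filter (fun L0 => i ∈ L0)).image
            (fun L0 => L0.map (embOf _ Gx (hcard Gx hGx))) := by
      ext L
      simp only [Finset.mem_filter, Finset.mem_biUnion, Finset.mem_image]
      constructor
      · rintro ⟨⟨G, hG, hLP⟩, hxL⟩
        have hGeq : G = Gx := grpuniq x G Gx hG hGx (pentsub G hG L hLP hxL) hxGx
        subst hGeq
        obtain ⟨L0, h0, rfl⟩ := (memPent G hG L).1 hLP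
        refine ⟨L0, ⟨h0, ?_⟩, rfl⟩
        obtain ⟨j, hj, hjx⟩ := Finset.mem_map.1 hxL
        have hji : j = i := (embOf _ _ (hcard G hG)).injective (by rw [hi, hjx])
        rwa [hji] at hj
      · rintro ⟨L0, ⟨h0, hiL0⟩, rfl⟩
        refine ⟨⟨Gx, hGx, (memPent Gx hGx _).2 ⟨L0, h0, rfl⟩⟩, ?_⟩
        rw [← hi]; exact Finset.mem_map_of_mem _ hiL0
    have hpentcard : ((Groups.biUnion Pent).filter (fun L => x ∈ L)).card = r := by
      rw [hpent1, Finset.card_image_of_injective _ (Finset.map_injective _), hp.point_deg i]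
    have herase : Finset.univ \ Gx
        = (Blocks.filter (fun B => x ∈ B)).biUnion (fun B => B.erase x) := by
      ext y
      simp only [Finset.mem_sdiff, Finset.mem_univ, true_and, Finset.mem_biUnion,
        Finset.mem_filter, Finset.mem_erase]
      constructor
      · intro hyGx
        have hxy : x ≠ y := fun h => hyGx (h ▸ hxGx)
        have hcrossc : ∀ G ∈ Groups, ¬ (x ∈ G ∧ y ∈ G) := by
          rintro G hG ⟨hxG, hyG⟩
          exact hyGx (grpuniq x G Gx hG hGx hxG hxGx ▸ hyG)
        obtain ⟨B, ⟨hB, hxB, hyB⟩, -⟩ := hg.cross_pair x y hxy hcrossc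
        exact ⟨B, ⟨hB, hxB⟩, fun h => hxy h.symm, hyB⟩
      · rintro ⟨B, ⟨hB, hxB⟩, hyx, hyB⟩ hyGx
        exact blkcross B hB x hxB y hyB (fun h => hyx h.symm) Gx hGx ⟨hxGx, hyGx⟩
    have hdisj2 : ∀ B1 ∈ Blocks.filter (fun B => x ∈ B),
        ∀ B2 ∈ Blocks.filter (fun B => x ∈ B), B1 ≠ B2 →
        Disjoint (B1.erase x) (B2.erase x) := by
      intro B1 h1 B2 h2 hne
      rw [Finset.disjoint_left]
      intro y hy1 hy2
      obtain ⟨hB1, hx1⟩ := Finset.mem_filter.1 h1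
      obtain ⟨hB2, hx2⟩ := Finset.mem_filter.1 h2
      obtain ⟨hyx1, hyB1⟩ := Finset.mem_erase.1 hy1
      obtain ⟨-, hyB2⟩ := Finset.mem_erase.1 hy2
      have hxy : x ≠ y := fun h => hyx1 h.symm
      obtain ⟨B, -, hun⟩ := hg.cross_pair x y hxy (blkcross B1 hB1 x hx1 y hyB1 hxy)
      exact hne ((hun B1 ⟨hB1, hx1, hyB1⟩).trans (hun B2 ⟨hB2, hx2, hyB2⟩).symm)
    have hcount : (Finset.univ \ Gx).card
        = ∑ B ∈ Blocks.filter (fun B => x ∈ B), (B.erase x).card := by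
      rw [herase]; exact Finset.card_biUnion hdisj2
    have hsum : ∑ B ∈ Blocks.filter (fun B => x ∈ B), (B.erase x).card
        = (Blocks.filter (fun B => x ∈ B)).card * 4 := by
      rw [Finset.sum_congr rfl (fun B hB => ?_), Finset.sum_const, smul_eq_mul]
      obtain ⟨hB, hx⟩ := Finset.mem_filter.1 hB
      rw [Finset.card_erase_of_mem hx, hg.block_size B hB]
    have hTcard : (Finset.univ \ Gx).card = (4*r+6) * (2*s) := by
      rw [Finset.card_sdiff_of_subset (Finset.subset_univ _), Finset.card_univ, huniv, hcard Gx hGx,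
        show (4*r+6)*(2*s+1) = (4*r+6)*(2*s) + (4*r+6) from by ring, Nat.add_sub_cancel]
    have hbcard : (Blocks.filter (fun B => x ∈ B)).card = 2*s*r + 3*s := by
      have h4 : (Blocks.filter (fun B => x ∈ B)).card * 4 = (2*s*r + 3*s) * 4 := by
        rw [← hsum, ← hcount, hTcard]; ring
      exact Nat.eq_of_mul_eq_mul_right (by norm_num) h4
    rw [hbcard, hpentcard]; ring
  -- partial linearity
  have plin : ∀ x y : V, x ≠ y → ∀ L ∈ NewLines, x ∈ L → y ∈ L →
      ∀ M ∈ NewLines, x ∈ M → y ∈ M → L = M := by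
    intro x y hxy L hL hxL hyL M hM hxM hyM
    rcases Finset.mem_union.1 hL with hLb | hLp
    · rcases Finset.mem_union.1 hM with hMb | hMp
      · obtain ⟨B, -, hun⟩ := hg.cross_pair x y hxy (blkcross L hLb x hxL y hyL hxy)
        exact (hun L ⟨hLb, hxL, hyL⟩).trans (hun M ⟨hMb, hxM, hyM⟩).symm
      · obtain ⟨G, hG, hMP⟩ := Finset.mem_biUnion.1 hMp
        exact absurd ⟨hxL, hyL⟩ (hg.within_pair x y hxy G hG
          (pentsub G hG M hMP hxM) (pentsub G hG M hMP hyM) L hLb)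
    · obtain ⟨G, hG, hLP⟩ := Finset.mem_biUnion.1 hLp
      rcases Finset.mem_union.1 hM with hMb | hMp
      · exact absurd ⟨hxM, hyM⟩ (hg.within_pair x y hxy G hG
          (pentsub G hG L hLP hxL) (pentsub G hG L hLP hyL) M hMb)
      · obtain ⟨G', hG', hMP⟩ := Finset.mem_biUnion.1 hMp
        have hGG : G' = G := grpuniq x G' G hG' hG
          (pentsub G' hG' M hMP hxM) (pentsub G hG L hLP hxL)
        subst hGG
        obtain ⟨L0, h0, rfl⟩ := (memPent G' hG L).1 hLP
        obtain ⟨M0, hm0, rfl⟩ := (memPent G' hG' M).1 hMP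
        obtain ⟨ix, hix, hixe⟩ := Finset.mem_map.1 hxL
        obtain ⟨iy, hiy, hiye⟩ := Finset.mem_map.1 hyL
        have hixM : ix ∈ M0 := by
          obtain ⟨j, hj, hje⟩ := Finset.mem_map.1 hxM
          have : j = ix := (embOf _ _ (hcard G' hG')).injective (hje.trans hixe.symm)
          rwa [this] at hj
        have hiyM : iy ∈ M0 := by
          obtain ⟨j, hj, hje⟩ := Finset.mem_map.1 hyM
          have : j = iy := (embOf _ _ (hcard G' hG')).injective (hje.trans hiye.symm)
          rwa [this] at hj
        have hne : ix ≠ iy := fun h => hxy (by rw [← hixe, ← hiye, h])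
        rw [hp.plinear ix iy hne L0 h0 hix hiy M0 hm0 hixM hiyM]
  -- opposite lines
  have hopp : ∀ x : V, ∃ L ∈ NewLines, ∀ y : V, y ∈ L ↔ ¬ Collin NewLines x y := by
    intro x
    obtain ⟨Gx, ⟨hGx, hxGx⟩, -⟩ := hg.partition x
    obtain ⟨i, hi⟩ := embOf_surj (hcard Gx hGx) hxGx
    obtain ⟨L0, h0, hL0⟩ := hp.opp i
    refine ⟨L0.map (embOf _ Gx (hcard Gx hGx)), Finset.mem_union_right _
      (Finset.mem_biUnion.2 ⟨Gx, hGx, (memPent Gx hGx _).2 ⟨L0, h0, rfl⟩⟩), fun y => ?_⟩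
    constructor
    · intro hy
      obtain ⟨j, hj, rfl⟩ := Finset.mem_map.1 hy
      have hnc := (hL0 j).1 hj
      have hij : i ≠ j := fun h => hnc (Or.inl h)
      have hxy : x ≠ (embOf _ Gx (hcard Gx hGx)) j := by
        rw [← hi]; exact fun h => hij ((embOf _ _ _).injective h)
      rintro (h | ⟨M, hM, hxM, hyM⟩)
      · exact hxy h
      · rcases Finset.mem_union.1 hM with hMb | hMp
        · exact hg.within_pair x _ hxy Gx hGx hxGx (embOf_mem _ j) M hMb ⟨hxM, hyM⟩
        · obtain ⟨G, hG, hMP⟩ := Finset.mem_biUnion.1 hMp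
          have hGeq : G = Gx := grpuniq x G Gx hG hGx (pentsub G hG M hMP hxM) hxGx
          subst hGeq
          obtain ⟨M0, hm0, rfl⟩ := (memPent G hG M).1 hMP
          obtain ⟨i', hi', hi'e⟩ := Finset.mem_map.1 hxM
          obtain ⟨j', hj', hj'e⟩ := Finset.mem_map.1 hyM
          have hii : i' = i := (embOf _ _ (hcard G hG)).injective (hi'e.trans hi.symm)
          have hjj : j' = j := (embOf _ _ (hcard G hG)).injective hj'e
          exact hnc (Or.inr ⟨M0, hm0, hii ▸ hi', hjj ▸ hj'⟩)
    · intro hnc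
      have hxy : x ≠ y := fun h => hnc (Or.inl h)
      have hyGx : y ∈ Gx := by
        by_contra hyn
        have hcrossc : ∀ G ∈ Groups, ¬ (x ∈ G ∧ y ∈ G) := by
          rintro G hG ⟨hxG, hyG⟩
          exact hyn (grpuniq x G Gx hG hGx hxG hxGx ▸ hyG)
        obtain ⟨B, ⟨hB, hxB, hyB⟩, -⟩ := hg.cross_pair x y hxy hcrossc
        exact hnc (Or.inr ⟨B, Finset.mem_union_left _ hB, hxB, hyB⟩)
      obtain ⟨j, hj⟩ := embOf_surj (hcard Gx hGx) hyGx
      have hjL0 : j ∈ L0 := by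
        rw [hL0 j]
        rintro (h | ⟨M0, hm0, hiM, hjM⟩)
        · exact hxy (by rw [← hi, ← hj, h])
        · refine hnc (Or.inr ⟨M0.map (embOf _ Gx (hcard Gx hGx)), Finset.mem_union_right _
            (Finset.mem_biUnion.2 ⟨Gx, hGx, (memPent Gx hGx _).2 ⟨M0, hm0, rfl⟩⟩), ?_, ?_⟩)
          · rw [← hi]; exact Finset.mem_map_of_mem _ hiM
          · rw [← hj]; exact Finset.mem_map_of_mem _ hjM
      rw [← hj]; exact Finset.mem_map_of_mem _ hjL0
  exact ⟨NewLines, lsize, deg, plin, hopp⟩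

/-- If a PENT(5, r) exists and a 5-GDD of type v^u exists with v = 4r + 6 and u odd,
then a PENT(5, u·r + 3(u-1)/2) exists (overlaying each group with a copy of the
PENT(5, r)). -/
theorem pent5_gdd_construction (r u : ℕ) (hu : Odd u)
    (hpent : ∃ Lines : Finset (Finset (Fin (4 * r + 6))), IsPentGeom Lines 5 r)
    (hgdd : ∃ Groups Blocks : Finset (Finset (Fin ((4 * r + 6) * u))),
      IsGDD 5 Groups Blocks ∧
      Groups.val.map Finset.card = Multiset.replicate u (4 * r + 6)) :
    ∃ Lines : Finset (Finset (Fin (4 * (u * r + 3 * (u - 1) / 2) + 6))),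
      IsPentGeom Lines 5 (u * r + 3 * (u - 1) / 2) := by
  obtain ⟨s, rfl⟩ := hu
  obtain ⟨Lines0, hp⟩ := hpent
  obtain ⟨Groups, Blocks, hg, hrep⟩ := hgdd
  have hdiv : 3 * (2 * s + 1 - 1) / 2 = 3 * s := by omega
  rw [hdiv]
  have hN : 4 * ((2 * s + 1) * r + 3 * s) + 6 = (4 * r + 6) * (2 * s + 1) := by ring
  rw [hN]
  have hcard : ∀ G ∈ Groups, G.card = 4 * r + 6 := by
    intro G hG
    have : G.card ∈ Groups.val.map Finset.card := Multiset.mem_map_of_mem _ hG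
    rw [hrep] at this
    exact Multiset.eq_of_mem_replicate this
  exact pent_construct r s Lines0 hp Groups Blocks hg hcard (by simp)
end
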